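/- arXiv:2210.16655 — 2 statements merged into one kernel-verified Lean document; each statement's English description precedes it below -/
import Mathlib

section
/- Let (X,Y) be a random vector on ℝ² whose law has a jointly continuous, strictly positive probability density function. Suppose that for every point (p,q) ∈ (0,1)² there exists ε > 0 such that Cov_A[X,Y] = 0 for all quantile splits p₁, q₁ ∈ (p − ε, p + ε) with p₁ < q₁ and p₂, q₂ ∈ (q − ε, q + ε) with p₂ < q₂ (intersected with (0,1)), where A is the corresponding quantile set. Then X and Y are independent. In other words, local linear independence implies independence. -/
open MeasureTheory ProbabilityTheory Set

/-- Conditional covariance of `X` and `Y` given the event `A`: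
`Cov_A[X,Y] = E[X·Y | A] − E[X | A] · E[Y | A]`, where `E[· | A]` is the expectation
with respect to the conditional probability `P[|A]`. -/
noncomputable def condCov {Ω : Type*} [MeasurableSpace Ω] (P : Measure Ω) (A : Set Ω)
    (X Y : Ω → ℝ) : ℝ :=
  (∫ ω, X ω * Y ω ∂(P[|A])) - (∫ ω, X ω ∂(P[|A])) * (∫ ω, Y ω ∂(P[|A]))

/-- The cumulative distribution function of a real random variable `X` under `P`. -/
noncomputable def cdfOf {Ω : Type*} [MeasurableSpace Ω] (P : Measure Ω) (X : Ω → ℝ) : ℝ → ℝ :=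
  fun x => (P {ω | X ω ≤ x}).toReal

/-- The quantile function of `X` under `P`, i.e. the inverse of its CDF
(well defined on `(0,1)` when the CDF is a bijection onto `(0,1)`). -/
noncomputable def quantileOf {Ω : Type*} [MeasurableSpace Ω] (P : Measure Ω) (X : Ω → ℝ) : ℝ → ℝ :=
  Function.invFun (cdfOf P X)

/-- The quantile set `A = {Q_X(p₁) ≤ X ≤ Q_X(q₁)} ∩ {Q_Y(p₂) ≤ Y ≤ Q_Y(q₂)}`
associated with the quantile splits `p₁ < q₁` and `p₂ < q₂`. -/
noncomputable def quantileSet {Ω : Type*} [MeasurableSpace Ω] (P : Measure Ω) (X Y : Ω → ℝ)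
    (p₁ q₁ p₂ q₂ : ℝ) : Set Ω :=
  {ω | quantileOf P X p₁ ≤ X ω ∧ X ω ≤ quantileOf P X q₁} ∩
    {ω | quantileOf P Y p₂ ≤ Y ω ∧ Y ω ≤ quantileOf P Y q₂}


open scoped ENNReal NNReal
open Filter intervalIntegral

set_option maxHeartbeats 1000000

section AuxLemmas

lemma key_step1 {g₁ g₂ : ℝ → ℝ} (h₁ : Continuous g₁) (h₂ : Continuous g₂) {α β : ℝ}
    (H : ∀ a b, a ∈ Ioo α β → b ∈ Ioo α β → a < b →
      (∫ x in a..b, x * g₁ x) * (∫ x in a..b, g₂ x) =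
      (∫ x in a..b, x * g₂ x) * (∫ x in a..b, g₁ x))
    {a b : ℝ} (ha : a ∈ Ioo α β) (hb : b ∈ Ioo α β) (hab : a < b) :
    (∫ x in a..b, (b - x) * (g₁ b * g₂ x - g₂ b * g₁ x)) = 0 := by
  have hc1 : Continuous (fun x : ℝ => x * g₁ x) := continuous_id.mul h₁
  have hc2 : Continuous (fun x : ℝ => x * g₂ x) := continuous_id.mul h₂
  set A₁ : ℝ → ℝ := fun u => ∫ x in a..u, x * g₁ x with hA₁
  set A₂ : ℝ → ℝ := fun u => ∫ x in a..u, x * g₂ x with hA₂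
  set B₁ : ℝ → ℝ := fun u => ∫ x in a..u, g₁ x with hB₁
  set B₂ : ℝ → ℝ := fun u => ∫ x in a..u, g₂ x with hB₂
  have dA₁ : HasDerivAt A₁ (b * g₁ b) b :=
    integral_hasDerivAt_right (hc1.intervalIntegrable a b)
      (hc1.stronglyMeasurable.stronglyMeasurableAtFilter) hc1.continuousAt
  have dA₂ : HasDerivAt A₂ (b * g₂ b) b :=
    integral_hasDerivAt_right (hc2.intervalIntegrable a b)
      (hc2.stronglyMeasurable.stronglyMeasurableAtFilter) hc2.continuousAt
  have dB₁ : HasDerivAt B₁ (g₁ b) b :=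
    integral_hasDerivAt_right (h₁.intervalIntegrable a b)
      (h₁.stronglyMeasurable.stronglyMeasurableAtFilter) h₁.continuousAt
  have dB₂ : HasDerivAt B₂ (g₂ b) b :=
    integral_hasDerivAt_right (h₂.intervalIntegrable a b)
      (h₂.stronglyMeasurable.stronglyMeasurableAtFilter) h₂.continuousAt
  have dF : HasDerivAt (fun u => A₁ u * B₂ u - A₂ u * B₁ u)
      ((b * g₁ b) * B₂ b + A₁ b * g₂ b - ((b * g₂ b) * B₁ b + A₂ b * g₁ b)) b :=
    (dA₁.mul dB₂).sub (dA₂.mul dB₁)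
  have hzero : (fun u => A₁ u * B₂ u - A₂ u * B₁ u) =ᶠ[nhds b] fun _ => (0 : ℝ) := by
    have hmem : Ioo a β ∈ nhds b := isOpen_Ioo.mem_nhds ⟨hab, hb.2⟩
    filter_upwards [hmem] with u hu
    have hu' : u ∈ Ioo α β := ⟨lt_trans ha.1 hu.1, hu.2⟩
    have := H a u ha hu' hu.1
    simp only [hA₁, hA₂, hB₁, hB₂]
    linarith [this]
  have dF0 : HasDerivAt (fun u => A₁ u * B₂ u - A₂ u * B₁ u) 0 b :=
    (hasDerivAt_const b (0:ℝ)).congr_of_eventuallyEq hzero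
  have hexpr : (b * g₁ b) * B₂ b + A₁ b * g₂ b - ((b * g₂ b) * B₁ b + A₂ b * g₁ b) = 0 :=
    dF.unique dF0
  have hfun : (fun x => (b - x) * (g₁ b * g₂ x - g₂ b * g₁ x)) =
      fun x => ((b * g₁ b) * g₂ x + g₂ b * (x * g₁ x)) -
        ((b * g₂ b) * g₁ x + g₁ b * (x * g₂ x)) := by
    funext x; ring
  have i1 : IntervalIntegrable (fun x => (b*g₁ b) * g₂ x) volume a b :=
    (continuous_const.mul h₂).intervalIntegrable a b
  have i2 : IntervalIntegrable (fun x => g₂ b * (x * g₁ x)) volume a b :=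
    (continuous_const.mul hc1).intervalIntegrable a b
  have i3 : IntervalIntegrable (fun x => (b*g₂ b) * g₁ x) volume a b :=
    (continuous_const.mul h₁).intervalIntegrable a b
  have i4 : IntervalIntegrable (fun x => g₁ b * (x * g₂ x)) volume a b :=
    (continuous_const.mul hc2).intervalIntegrable a b
  rw [hfun, intervalIntegral.integral_sub (i1.add i2) (i3.add i4),
    intervalIntegral.integral_add i1 i2, intervalIntegral.integral_add i3 i4,
    intervalIntegral.integral_const_mul, intervalIntegral.integral_const_mul,
    intervalIntegral.integral_const_mul, intervalIntegral.integral_const_mul]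
  simp only [hA₁, hA₂, hB₁, hB₂] at hexpr ⊢
  linarith

lemma key {g₁ g₂ : ℝ → ℝ} (h₁ : Continuous g₁) (h₂ : Continuous g₂) {α β : ℝ}
    (H : ∀ a b, a ∈ Ioo α β → b ∈ Ioo α β → a < b →
      (∫ x in a..b, x * g₁ x) * (∫ x in a..b, g₂ x) =
      (∫ x in a..b, x * g₂ x) * (∫ x in a..b, g₁ x)) :
    ∀ a ∈ Ioo α β, ∀ b ∈ Ioo α β, g₁ b * g₂ a = g₂ b * g₁ a := by
  -- first prove it for a < b
  have main : ∀ a ∈ Ioo α β, ∀ b ∈ Ioo α β, a < b → g₁ b * g₂ a = g₂ b * g₁ a := by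
    intro a ha b hb hab
    set G : ℝ → ℝ := fun x => (b - x) * (g₁ b * g₂ x - g₂ b * g₁ x) with hG
    have hGc : Continuous G := by
      apply Continuous.mul
      · exact continuous_const.sub continuous_id
      · exact (continuous_const.mul h₂).sub (continuous_const.mul h₁)
    set Φ : ℝ → ℝ := fun u => ∫ x in u..b, G x with hΦ
    have dΦ : HasDerivAt Φ (-G a) a :=
      integral_hasDerivAt_left (hGc.intervalIntegrable a b)
        (hGc.stronglyMeasurable.stronglyMeasurableAtFilter) hGc.continuousAt
    have hzero : Φ =ᶠ[nhds a] fun _ => (0 : ℝ) := by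
      have hmem : Ioo α b ∈ nhds a := isOpen_Ioo.mem_nhds ⟨ha.1, hab⟩
      filter_upwards [hmem] with u hu
      exact key_step1 h₁ h₂ H ⟨hu.1, lt_trans hu.2 hb.2⟩ hb hu.2
    have dΦ0 : HasDerivAt Φ 0 a :=
      (hasDerivAt_const a (0:ℝ)).congr_of_eventuallyEq hzero
    have : -G a = 0 := dΦ.unique dΦ0
    have hGa : (b - a) * (g₁ b * g₂ a - g₂ b * g₁ a) = 0 := by
      simpa [hG] using neg_eq_zero.mp this
    have hba : b - a ≠ 0 := sub_ne_zero.mpr (ne_of_gt hab)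
    have := mul_eq_zero.mp hGa
    rcases this with h | h
    · exact absurd h hba
    · linarith
  intro a ha b hb
  rcases lt_trichotomy a b with h | h | h
  · exact main a ha b hb h
  · rw [h]; ring
  · have := main b hb a ha h; linarith [this]

lemma pos_of_open {f : ℝ × ℝ → ℝ} (hf_cont : Continuous f) (hf_pos : ∀ p, 0 < f p)
    {U : Set (ℝ × ℝ)} (hU : IsOpen U) (hne : U.Nonempty) :
    0 < (volume : Measure (ℝ × ℝ)).withDensity (fun p => ENNReal.ofReal (f p)) U := by
  obtain ⟨z, hz⟩ := hne
  set V : Set (ℝ × ℝ) := U ∩ {w | f z / 2 < f w} with hV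
  have hVopen : IsOpen V := hU.inter (isOpen_lt continuous_const hf_cont)
  have hzV : z ∈ V := ⟨hz, by simp only [mem_setOf_eq]; linarith [hf_pos z]⟩
  have hvol : 0 < (volume : Measure (ℝ × ℝ)) V := hVopen.measure_pos volume ⟨z, hzV⟩
  have hle : ENNReal.ofReal (f z / 2) * volume V ≤
      (volume : Measure (ℝ × ℝ)).withDensity (fun p => ENNReal.ofReal (f p)) V := by
    rw [withDensity_apply _ hVopen.measurableSet, ← setLIntegral_const]
    refine setLIntegral_mono (by fun_prop) ?_
    intro w hw
    exact ENNReal.ofReal_le_ofReal (le_of_lt hw.2)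
  have hpos : 0 < ENNReal.ofReal (f z / 2) * volume V := by
    apply ENNReal.mul_pos
    · simp only [ne_eq, ENNReal.ofReal_eq_zero, not_le]; linarith [hf_pos z]
    · exact hvol.ne'
  calc (0:ENNReal) < ENNReal.ofReal (f z / 2) * volume V := hpos
    _ ≤ _ := hle
    _ ≤ _ := measure_mono inter_subset_left

variable {ν : Measure ℝ} [IsProbabilityMeasure ν]

lemma cdf_continuous (hsing : ∀ x : ℝ, ν {x} = 0) : Continuous (cdf ν) := by
  rw [continuous_iff_continuousAt]
  intro x
  rw [(monotone_cdf ν).continuousAt_iff_leftLim_eq_rightLim, (cdf ν).rightLim_eq]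
  have h := (cdf ν).measure_singleton x
  rw [measure_cdf ν, hsing x] at h
  have h1 : cdf ν x - Function.leftLim (cdf ν) x ≤ 0 :=
    ENNReal.ofReal_eq_zero.mp h.symm
  have h2 : Function.leftLim (cdf ν) x ≤ cdf ν x := (monotone_cdf ν).leftLim_le le_rfl
  linarith

lemma cdf_lt_cdf (hIoo : ∀ a b : ℝ, a < b → 0 < ν (Ioo a b)) {x y : ℝ} (hxy : x < y) :
    cdf ν x < cdf ν y := by
  have h := (cdf ν).measure_Ioc x y
  rw [measure_cdf ν] at h
  have hpos : 0 < ν (Ioc x y) := lt_of_lt_of_le (hIoo x y hxy) (measure_mono Ioo_subset_Ioc_self)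
  rw [h] at hpos
  have := ENNReal.ofReal_pos.mp hpos
  linarith

lemma cdf_mem_Ioo (hIoo : ∀ a b : ℝ, a < b → 0 < ν (Ioo a b)) (x : ℝ) :
    cdf ν x ∈ Ioo (0:ℝ) 1 := by
  constructor
  · have := cdf_lt_cdf hIoo (show x - 1 < x by linarith)
    linarith [cdf_nonneg ν (x - 1)]
  · have := cdf_lt_cdf hIoo (show x < x + 1 by linarith)
    linarith [cdf_le_one ν (x + 1)]

lemma cdf_surjOn (hsing : ∀ x : ℝ, ν {x} = 0) {p : ℝ} (hp : p ∈ Ioo (0:ℝ) 1) :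
    ∃ x, cdf ν x = p := by
  have h1 : ∀ᶠ x in atBot, cdf ν x < p := (tendsto_cdf_atBot ν).eventually_lt_const hp.1
  have h2 : ∀ᶠ x in atTop, p < cdf ν x := (tendsto_cdf_atTop ν).eventually_const_lt hp.2
  obtain ⟨a, ha⟩ := h1.exists
  obtain ⟨b, hb⟩ := h2.exists
  have hab : a ≤ b := by
    by_contra hcon
    push_neg at hcon
    have := monotone_cdf ν hcon.le
    linarith
  have := intermediate_value_Icc hab (cdf_continuous hsing).continuousOn
  obtain ⟨x, _, hx⟩ := this ⟨ha.le, hb.le⟩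
  exact ⟨x, hx⟩

lemma local_rect {f : ℝ × ℝ → ℝ} (hf_cont : Continuous f) {u₁ u₂ v₁ v₂ : ℝ}
    (H : ∀ s t a b : ℝ, s ∈ Ioo u₁ u₂ → t ∈ Ioo u₁ u₂ → s < t →
        a ∈ Ioo v₁ v₂ → b ∈ Ioo v₁ v₂ → a < b →
      (∫ y in a..b, y * (∫ x in s..t, x * f (x, y))) * (∫ y in a..b, (∫ x in s..t, f (x, y))) =
      (∫ y in a..b, y * (∫ x in s..t, f (x, y))) * (∫ y in a..b, (∫ x in s..t, x * f (x, y)))) :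
    ∀ x ∈ Ioo u₁ u₂, ∀ x' ∈ Ioo u₁ u₂, ∀ y ∈ Ioo v₁ v₂, ∀ y' ∈ Ioo v₁ v₂,
      f (x', y') * f (x, y) = f (x, y') * f (x', y) := by
  have hswap : Continuous (fun q : ℝ × ℝ => f (q.2, q.1)) :=
    hf_cont.comp (continuous_snd.prodMk continuous_fst)
  have hcontc : ∀ s t : ℝ, Continuous (fun y => ∫ x in s..t, x * f (x, y)) := by
    intro s t
    apply intervalIntegral.continuous_parametric_intervalIntegral_of_continuous' (μ := volume)
      (f := fun y x => x * f (x, y))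
    exact continuous_snd.mul (hf_cont.comp (continuous_snd.prodMk continuous_fst))
  have hcontk : ∀ s t : ℝ, Continuous (fun y => ∫ x in s..t, f (x, y)) := by
    intro s t
    apply intervalIntegral.continuous_parametric_intervalIntegral_of_continuous' (μ := volume)
      (f := fun y x => f (x, y))
    exact hf_cont.comp (continuous_snd.prodMk continuous_fst)
  -- Round 1 : for fixed s < t in U, proportionality in y
  have R1 : ∀ s t : ℝ, s ∈ Ioo u₁ u₂ → t ∈ Ioo u₁ u₂ → s < t →
      ∀ y ∈ Ioo v₁ v₂, ∀ y' ∈ Ioo v₁ v₂,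
        (∫ x in s..t, x * f (x, y')) * (∫ x in s..t, f (x, y)) =
        (∫ x in s..t, f (x, y')) * (∫ x in s..t, x * f (x, y)) := by
    intro s t hs ht hst y hy y' hy'
    exact key (hcontc s t) (hcontk s t)
      (fun a b ha hb hab => H s t a b hs ht hst ha hb hab) y hy y' hy'
  -- Round 2 : fix y, y' in V, proportionality in x
  intro x hx x' hx' y hy y' hy'
  have R2 := key (g₁ := fun x => f (x, y')) (g₂ := fun x => f (x, y))
    (hf_cont.comp (continuous_id.prodMk continuous_const))
    (hf_cont.comp (continuous_id.prodMk continuous_const))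
    (fun s t hs ht hst => by
      linear_combination R1 s t hs ht hst y hy y' hy') x hx x' hx'
  have R2' : f (x', y') * f (x, y) = f (x', y) * f (x, y') := by simpa using R2
  linear_combination R2'

lemma segpt_mem {x x' : ℝ} {i n : ℕ} (hn : 0 < n) (hi : i ≤ n) :
    x + (i : ℝ) * ((x' - x) / n) ∈ Icc (min x x') (max x x') := by
  have h0 : (0:ℝ) ≤ (i : ℝ) / n := by positivity
  have h1 : (i : ℝ) / n ≤ 1 := by
    rw [div_le_one (by exact_mod_cast hn)]
    exact_mod_cast hi
  have hxi : x + (i : ℝ) * ((x' - x) / n) = x + ((i : ℝ) / n) * (x' - x) := by ring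
  rw [hxi]
  rcases le_total x x' with h | h
  · constructor
    · rw [min_eq_left h]; nlinarith
    · rw [max_eq_right h]; nlinarith
  · constructor
    · rw [min_eq_right h]; nlinarith
    · rw [max_eq_left h]; nlinarith

lemma global_rect {f : ℝ × ℝ → ℝ} (hf_pos : ∀ p, 0 < f p)
    (hloc : ∀ z : ℝ × ℝ, ∃ U V : Set ℝ, IsOpen U ∧ IsOpen V ∧ z.1 ∈ U ∧ z.2 ∈ V ∧
      ∀ x ∈ U, ∀ x' ∈ U, ∀ y ∈ V, ∀ y' ∈ V, f (x', y') * f (x, y) = f (x, y') * f (x', y)) :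
    ∀ x x' y y' : ℝ, f (x', y') * f (x, y) = f (x, y') * f (x', y) := by
  set g : ℝ → ℝ → ℝ := fun x y => Real.log (f (x, y)) with hg
  have hgloc : ∀ z : ℝ × ℝ, ∃ U V : Set ℝ, IsOpen U ∧ IsOpen V ∧ z.1 ∈ U ∧ z.2 ∈ V ∧
      ∀ x ∈ U, ∀ x' ∈ U, ∀ y ∈ V, ∀ y' ∈ V, g x' y' + g x y = g x y' + g x' y := by
    intro z
    obtain ⟨U, V, hUo, hVo, hzU, hzV, hprop⟩ := hloc z
    refine ⟨U, V, hUo, hVo, hzU, hzV, fun x hx x' hx' y hy y' hy' => ?_⟩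
    have := hprop x hx x' hx' y hy y' hy'
    have e1 : Real.log (f (x', y') * f (x, y)) = Real.log (f (x, y') * f (x', y)) := by rw [this]
    rw [Real.log_mul (hf_pos _).ne' (hf_pos _).ne',
      Real.log_mul (hf_pos _).ne' (hf_pos _).ne'] at e1
    simpa [hg] using e1
  -- suffices to prove the additive identity
  intro x x' y y'
  suffices hsuff : g x' y' + g x y = g x y' + g x' y by
    have := congrArg Real.exp hsuff
    rw [Real.exp_add, Real.exp_add] at this
    simpa [hg, Real.exp_log (hf_pos _)] using this
  -- compact rectangle
  set K : Set (ℝ × ℝ) := Icc (min x x') (max x x') ×ˢ Icc (min y y') (max y y') with hK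
  have hKc : IsCompact K := isCompact_Icc.prod isCompact_Icc
  choose U V hUo hVo hzU hzV hprop using hgloc
  have hKsub : K ⊆ ⋃ z : ℝ × ℝ, (U z) ×ˢ (V z) := fun w _ =>
    mem_iUnion.mpr ⟨w, ⟨hzU w, hzV w⟩⟩
  obtain ⟨δ, hδ, hball⟩ := lebesgue_number_lemma_of_metric hKc
    (fun z => (hUo z).prod (hVo z)) hKsub
  -- choose n
  obtain ⟨n₀, hn₀⟩ := exists_nat_gt (max (|x' - x| / δ) (|y' - y| / δ))
  set n : ℕ := n₀ + 1 with hn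
  have hnpos : 0 < n := Nat.succ_pos _
  have hnR : (0:ℝ) < n := by exact_mod_cast hnpos
  have hxd : |x' - x| / (n:ℝ) < δ := by
    have h1 : |x' - x| / δ < n := lt_of_le_of_lt (le_max_left _ _)
      (lt_of_lt_of_le hn₀ (by exact_mod_cast Nat.le_succ n₀))
    rw [div_lt_iff₀ hδ] at h1
    rw [div_lt_iff₀ hnR]
    linarith
  have hyd : |y' - y| / (n:ℝ) < δ := by
    have h1 : |y' - y| / δ < n := lt_of_le_of_lt (le_max_right _ _)
      (lt_of_lt_of_le hn₀ (by exact_mod_cast Nat.le_succ n₀))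
    rw [div_lt_iff₀ hδ] at h1
    rw [div_lt_iff₀ hnR]
    linarith
  set xi : ℕ → ℝ := fun i => x + (i : ℝ) * ((x' - x) / n) with hxi
  set yj : ℕ → ℝ := fun j => y + (j : ℝ) * ((y' - y) / n) with hyj
  have hxin : xi n = x' := by
    simp only [hxi]
    field_simp
    ring
  have hyjn : yj n = y' := by
    simp only [hyj]
    field_simp
    ring
  have hxi0 : xi 0 = x := by simp [hxi]
  have hyj0 : yj 0 = y := by simp [hyj]
  have hstep : ∀ i j : ℕ, i < n → j < n →
      g (xi (i+1)) (yj (j+1)) + g (xi i) (yj j) = g (xi i) (yj (j+1)) + g (xi (i+1)) (yj j) := by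
    intro i j hi hj
    have hw : (xi i, yj j) ∈ K := ⟨segpt_mem hnpos hi.le, segpt_mem hnpos hj.le⟩
    obtain ⟨z, hz⟩ := hball _ hw
    have hdx : dist (xi (i+1)) (xi i) < δ := by
      rw [Real.dist_eq]
      have : xi (i+1) - xi i = (x' - x) / n := by
        simp only [hxi]; push_cast; ring
      rw [this, abs_div, abs_of_pos hnR]
      exact lt_of_le_of_lt (le_of_eq rfl) hxd
    have hdy : dist (yj (j+1)) (yj j) < δ := by
      rw [Real.dist_eq]
      have : yj (j+1) - yj j = (y' - y) / n := by
        simp only [hyj]; push_cast; ring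
      rw [this, abs_div, abs_of_pos hnR]
      exact lt_of_le_of_lt (le_of_eq rfl) hyd
    have hxiU : xi i ∈ U z := (hz (Metric.mem_ball_self hδ)).1
    have hyjV : yj j ∈ V z := (hz (Metric.mem_ball_self hδ)).2
    have hxi1U : xi (i+1) ∈ U z := by
      have : ((xi (i+1), yj j) : ℝ × ℝ) ∈ Metric.ball (xi i, yj j) δ := by
        rw [Metric.mem_ball, Prod.dist_eq]
        exact max_lt hdx (by simpa using hδ)
      exact (hz this).1
    have hyj1V : yj (j+1) ∈ V z := by
      have : ((xi i, yj (j+1)) : ℝ × ℝ) ∈ Metric.ball (xi i, yj j) δ := by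
        rw [Metric.mem_ball, Prod.dist_eq]
        exact max_lt (by simpa using hδ) hdy
      exact (hz this).2
    exact hprop z _ hxiU _ hxi1U _ hyjV _ hyj1V
  -- telescoping
  have hsum : ∀ i : ℕ, i < n →
      g (xi (i+1)) (yj n) - g (xi i) (yj n) - (g (xi (i+1)) (yj 0) - g (xi i) (yj 0)) = 0 := by
    intro i hi
    have : (Finset.range n).sum (fun j =>
        (g (xi (i+1)) (yj (j+1)) - g (xi i) (yj (j+1))) - (g (xi (i+1)) (yj j) - g (xi i) (yj j)))
        = g (xi (i+1)) (yj n) - g (xi i) (yj n) - (g (xi (i+1)) (yj 0) - g (xi i) (yj 0)) :=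
      Finset.sum_range_sub (fun j => g (xi (i+1)) (yj j) - g (xi i) (yj j)) n
    rw [← this]
    apply Finset.sum_eq_zero
    intro j hj
    have := hstep i j hi (Finset.mem_range.mp hj)
    linarith
  have htot : g (xi n) (yj n) - g (xi 0) (yj n) - (g (xi n) (yj 0) - g (xi 0) (yj 0)) = 0 := by
    have h1 : (Finset.range n).sum (fun i => g (xi (i+1)) (yj n) - g (xi i) (yj n))
        = g (xi n) (yj n) - g (xi 0) (yj n) := Finset.sum_range_sub (fun i => g (xi i) (yj n)) n
    have h2 : (Finset.range n).sum (fun i => g (xi (i+1)) (yj 0) - g (xi i) (yj 0))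
        = g (xi n) (yj 0) - g (xi 0) (yj 0) := Finset.sum_range_sub (fun i => g (xi i) (yj 0)) n
    have h3 : (Finset.range n).sum (fun i => g (xi (i+1)) (yj n) - g (xi i) (yj n))
        = (Finset.range n).sum (fun i => g (xi (i+1)) (yj 0) - g (xi i) (yj 0)) := by
      apply Finset.sum_congr rfl
      intro i hi
      have := hsum i (Finset.mem_range.mp hi)
      linarith
    rw [h1, h2] at h3
    linarith
  rw [hxin, hyjn, hxi0, hyj0] at htot
  linarith

lemma cov_translate {Ω : Type*} [MeasurableSpace Ω] (P : Measure Ω) [IsProbabilityMeasure P]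
    (X Y : Ω → ℝ) (hX : Measurable X) (hY : Measurable Y)
    (f : ℝ × ℝ → ℝ) (hf_cont : Continuous f) (hf_pos : ∀ p, 0 < f p)
    (hf_law : Measure.map (fun ω => (X ω, Y ω)) P =
      (volume : Measure (ℝ × ℝ)).withDensity (fun p => ENNReal.ofReal (f p)))
    {s t a b : ℝ} (hst : s < t) (hab : a < b)
    (hcov : condCov P ((fun ω => (X ω, Y ω)) ⁻¹' (Icc s t ×ˢ Icc a b)) X Y = 0) :
    (∫ y in a..b, y * (∫ x in s..t, x * f (x, y))) * (∫ y in a..b, (∫ x in s..t, f (x, y))) =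
    (∫ y in a..b, y * (∫ x in s..t, f (x, y))) * (∫ y in a..b, (∫ x in s..t, x * f (x, y))) := by
  set μ : Measure (ℝ × ℝ) := (volume : Measure (ℝ × ℝ)).withDensity
    (fun p => ENNReal.ofReal (f p)) with hμ
  have hφ : Measurable (fun ω => (X ω, Y ω)) := hX.prodMk hY
  set box : Set (ℝ × ℝ) := Icc s t ×ˢ Icc a b with hbox_def
  have hbox : MeasurableSet box := measurableSet_Icc.prod measurableSet_Icc
  have hμprob : IsProbabilityMeasure μ := by
    rw [← hf_law]; exact Measure.isProbabilityMeasure_map hφ.aemeasurable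
  -- the main translation for a continuous g
  have main : ∀ g : ℝ × ℝ → ℝ, Continuous g →
      ∫ ω in (fun ω => (X ω, Y ω)) ⁻¹' box, g (X ω, Y ω) ∂P =
      ∫ y in a..b, (∫ x in s..t, f (x, y) * g (x, y)) := by
    intro g hg
    have step1 : ∫ ω in (fun ω => (X ω, Y ω)) ⁻¹' box, g (X ω, Y ω) ∂P
        = ∫ p in box, g p ∂μ := by
      rw [← hf_law]
      exact (setIntegral_map hbox hg.aestronglyMeasurable hφ.aemeasurable).symm
    rw [step1]
    have step2 : ∫ p in box, g p ∂μ = ∫ p in box, f p * g p ∂(volume : Measure (ℝ × ℝ)) := by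
      rw [hμ, restrict_withDensity hbox]
      have hd : (fun p : ℝ × ℝ => ENNReal.ofReal (f p)) =
          fun p : ℝ × ℝ => ((f p).toNNReal : ℝ≥0∞) := rfl
      have hmeas : Measurable fun p : ℝ × ℝ => (f p).toNNReal := by fun_prop
      rw [hd, integral_withDensity_eq_integral_smul hmeas g]
      apply MeasureTheory.integral_congr_ae
      filter_upwards with p
      rw [NNReal.smul_def, Real.coe_toNNReal _ (hf_pos p).le]
      rfl
    rw [step2]
    set F : ℝ × ℝ → ℝ := fun p => f p * g p with hF
    have hFc : Continuous F := hf_cont.mul hg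
    have hint : IntegrableOn F box (volume : Measure (ℝ × ℝ)) :=
      hFc.continuousOn.integrableOn_compact (isCompact_Icc.prod isCompact_Icc)
    have hint' : Integrable (Function.uncurry fun x y => F (x, y))
        ((volume.restrict (Icc s t)).prod (volume.restrict (Icc a b))) := by
      rw [Measure.prod_restrict]
      have : Function.uncurry (fun x y => F (x, y)) = F := by
        ext ⟨x, y⟩; rfl
      rw [this]
      rw [← Measure.volume_eq_prod]
      exact hint
    have step3 : ∫ p in box, F p ∂(volume : Measure (ℝ × ℝ))
        = ∫ x in Icc s t, ∫ y in Icc a b, F (x, y) := by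
      rw [Measure.volume_eq_prod]
      apply setIntegral_prod
      rw [← Measure.volume_eq_prod]
      exact hint
    rw [step3]
    rw [integral_integral_swap hint']
    have houter : ∀ y : ℝ, (∫ x in Icc s t, F (x, y)) = ∫ x in s..t, F (x, y) := by
      intro y
      rw [integral_Icc_eq_integral_Ioc, intervalIntegral.integral_of_le hst.le]
    have : (fun y => ∫ x in Icc s t, F (x, y)) = fun y => ∫ x in s..t, F (x, y) :=
      funext houter
    rw [this, integral_Icc_eq_integral_Ioc, intervalIntegral.integral_of_le hab.le]
  -- abbreviations
  set A : Set Ω := (fun ω => (X ω, Y ω)) ⁻¹' box with hA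
  have hPA : P A = μ box := by
    rw [hA, ← hf_law, Measure.map_apply hφ hbox]
  have hpos : 0 < μ box := by
    refine lt_of_lt_of_le (pos_of_open hf_cont hf_pos
      ((isOpen_Ioo.prod isOpen_Ioo) : IsOpen ((Ioo s t) ×ˢ (Ioo a b)))
      (((nonempty_Ioo.mpr hst).prod (nonempty_Ioo.mpr hab)))) (measure_mono ?_)
    exact prod_mono Ioo_subset_Icc_self Ioo_subset_Icc_self
  set m : ℝ := (μ box).toReal with hm
  have hmpos : 0 < m := ENNReal.toReal_pos hpos.ne' (measure_ne_top μ box)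
  -- conditional integrals
  have hcond : ∀ Z : Ω → ℝ, ∫ ω, Z ω ∂(P[|A]) = m⁻¹ * ∫ ω in A, Z ω ∂P := by
    intro Z
    rw [ProbabilityTheory.cond, MeasureTheory.integral_smul_measure, hPA, ENNReal.toReal_inv, hm]
    rfl
  set D : (ℝ × ℝ → ℝ) → ℝ := fun g => ∫ y in a..b, (∫ x in s..t, f (x, y) * g (x, y)) with hD
  have hXY : ∫ ω in A, X ω * Y ω ∂P = D (fun p => p.1 * p.2) := main _ (continuous_fst.mul continuous_snd)
  have hXA : ∫ ω in A, X ω ∂P = D (fun p => p.1) := main _ continuous_fst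
  have hYA : ∫ ω in A, Y ω ∂P = D (fun p => p.2) := main _ continuous_snd
  have hmD : m = D (fun _ => 1) := by
    have h1 : ∫ ω in A, (1:ℝ) ∂P = D (fun _ => 1) := main _ continuous_const
    rw [setIntegral_const, measureReal_def, hPA, smul_eq_mul, mul_one] at h1
    exact h1
  -- translate hcov
  rw [condCov, hcond, hcond, hcond, hXY, hXA, hYA] at hcov
  have hiden : D (fun _ => 1) * D (fun p => p.1 * p.2) = D (fun p => p.1) * D (fun p => p.2) := by
    rw [← hmD]
    have h := hcov
    have hm0 : m ≠ 0 := hmpos.ne'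
    field_simp at h
    have h3 : m * ((m * D fun p => p.1 * p.2) - (D fun p => p.1) * D fun p => p.2) = 0 := by
      linear_combination m * h
    rcases mul_eq_zero.mp h3 with h4 | h4
    · exact absurd h4 hm0
    · linarith
  -- rewrite the four D's into the target shapes
  have e1 : D (fun p => p.1 * p.2) = ∫ y in a..b, y * (∫ x in s..t, x * f (x, y)) := by
    apply intervalIntegral.integral_congr
    intro y _
    simp only []
    rw [← intervalIntegral.integral_const_mul]
    apply intervalIntegral.integral_congr
    intro x _
    ring
  have e2 : D (fun p => p.1) = ∫ y in a..b, (∫ x in s..t, x * f (x, y)) := by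
    apply intervalIntegral.integral_congr
    intro y _
    apply intervalIntegral.integral_congr
    intro x _
    ring
  have e3 : D (fun p => p.2) = ∫ y in a..b, y * (∫ x in s..t, f (x, y)) := by
    apply intervalIntegral.integral_congr
    intro y _
    simp only []
    rw [← intervalIntegral.integral_const_mul]
    apply intervalIntegral.integral_congr
    intro x _
    ring
  have e4 : D (fun _ => 1) = ∫ y in a..b, (∫ x in s..t, f (x, y)) := by
    apply intervalIntegral.integral_congr
    intro y _
    apply intervalIntegral.integral_congr
    intro x _
    ring
  rw [e1, e2, e3, e4] at hiden
  linear_combination hiden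

lemma indep_of_rect {Ω : Type*} [MeasurableSpace Ω] (P : Measure Ω) [IsProbabilityMeasure P]
    (X Y : Ω → ℝ) (hX : Measurable X) (hY : Measurable Y)
    (f : ℝ × ℝ → ℝ) (hf_cont : Continuous f) (hf_pos : ∀ p, 0 < f p)
    (hf_law : Measure.map (fun ω => (X ω, Y ω)) P =
      (volume : Measure (ℝ × ℝ)).withDensity (fun p => ENNReal.ofReal (f p)))
    (hrect : ∀ x x' y y' : ℝ, f (x', y') * f (x, y) = f (x, y') * f (x', y)) :
    IndepFun X Y P := by
  set μ : Measure (ℝ × ℝ) := (volume : Measure (ℝ × ℝ)).withDensity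
    (fun p => ENNReal.ofReal (f p)) with hμ
  have hφ : Measurable (fun ω => (X ω, Y ω)) := hX.prodMk hY
  have hμprob : IsProbabilityMeasure μ := by
    rw [← hf_law]; exact Measure.isProbabilityMeasure_map hφ.aemeasurable
  set a0 : ℝ → ℝ := fun x => f (x, 0) / f (0, 0) with ha0
  set b0 : ℝ → ℝ := fun y => f (0, y) with hb0
  have ha0c : Continuous a0 := (hf_cont.comp (continuous_id.prodMk continuous_const)).div_const _
  have hb0c : Continuous b0 := hf_cont.comp (continuous_const.prodMk continuous_id)
  have ha0pos : ∀ x, 0 ≤ a0 x := fun x => le_of_lt (div_pos (hf_pos _) (hf_pos _))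
  have hfac : ∀ p : ℝ × ℝ, f p = a0 p.1 * b0 p.2 := by
    rintro ⟨x, y⟩
    have h := hrect 0 x 0 y
    have hc : f (0, 0) ≠ 0 := (hf_pos _).ne'
    simp only [ha0, hb0]
    rw [div_mul_eq_mul_div, eq_div_iff hc]
    linear_combination h
  set A : Set ℝ → ℝ≥0∞ := fun s => ∫⁻ x in s, ENNReal.ofReal (a0 x) with hA
  set B : Set ℝ → ℝ≥0∞ := fun s => ∫⁻ y in s, ENNReal.ofReal (b0 y) with hB
  have claim : ∀ s t : Set ℝ, MeasurableSet s → MeasurableSet t → μ (s ×ˢ t) = A s * B t := by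
    intro s t hs ht
    rw [hμ, withDensity_apply _ (hs.prod ht), Measure.volume_eq_prod, ← Measure.prod_restrict]
    have hmeasf : Measurable fun p : ℝ × ℝ => ENNReal.ofReal (f p) :=
      ENNReal.measurable_ofReal.comp hf_cont.measurable
    rw [lintegral_prod _ hmeasf.aemeasurable]
    have hinner : ∀ x : ℝ, ∫⁻ y in t, ENNReal.ofReal (f (x, y)) = ENNReal.ofReal (a0 x) * B t := by
      intro x
      have : ∀ y : ℝ, ENNReal.ofReal (f (x, y)) = ENNReal.ofReal (a0 x) * ENNReal.ofReal (b0 y) := by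
        intro y
        rw [← ENNReal.ofReal_mul (ha0pos x)]
        congr 1
        exact hfac (x, y)
      simp_rw [this]
      rw [lintegral_const_mul _ hb0c.measurable.ennreal_ofReal]
    simp_rw [hinner]
    rw [lintegral_mul_const _ ha0c.measurable.ennreal_ofReal]
  have hAB1 : A univ * B univ = 1 := by
    rw [← claim univ univ MeasurableSet.univ MeasurableSet.univ]
    have : (univ : Set ℝ) ×ˢ (univ : Set ℝ) = (univ : Set (ℝ × ℝ)) := univ_prod_univ
    rw [this]
    exact measure_univ
  rw [indepFun_iff_measure_inter_preimage_eq_mul]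
  intro s t hs ht
  have hXY : X ⁻¹' s ∩ Y ⁻¹' t = (fun ω => (X ω, Y ω)) ⁻¹' (s ×ˢ t) := by
    ext ω; simp [Set.mem_prod]
  have hXs : X ⁻¹' s = (fun ω => (X ω, Y ω)) ⁻¹' (s ×ˢ (univ : Set ℝ)) := by
    ext ω; simp
  have hYt : Y ⁻¹' t = (fun ω => (X ω, Y ω)) ⁻¹' ((univ : Set ℝ) ×ˢ t) := by
    ext ω; simp
  rw [hXY, hXs, hYt, ← Measure.map_apply hφ (hs.prod ht),
    ← Measure.map_apply hφ (hs.prod MeasurableSet.univ),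
    ← Measure.map_apply hφ (MeasurableSet.univ.prod ht), hf_law]
  show μ (s ×ˢ t) = μ (s ×ˢ univ) * μ (univ ×ˢ t)
  rw [claim s t hs ht, claim s univ hs MeasurableSet.univ,
    claim univ t MeasurableSet.univ ht]
  calc A s * B t = A s * B t * (A univ * B univ) := by rw [hAB1, mul_one]
    _ = A s * B univ * (A univ * B t) := by ring

end AuxLemmas

/-- Local linear independence implies independence: if around every point `(p,q) ∈ (0,1)²`
there is a neighbourhood of quantile splits on which all conditional covariances vanish,
then `X` and `Y` are independent. -/
theorem indepFun_of_local_condCov_eq_zero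
    {Ω : Type*} [MeasurableSpace Ω] (P : Measure Ω) [IsProbabilityMeasure P]
    (X Y : Ω → ℝ) (hX : Measurable X) (hY : Measurable Y)
    (f : ℝ × ℝ → ℝ) (hf_cont : Continuous f) (hf_pos : ∀ p, 0 < f p)
    (hf_law : Measure.map (fun ω => (X ω, Y ω)) P =
      (volume : Measure (ℝ × ℝ)).withDensity (fun p => ENNReal.ofReal (f p)))
    (hloc : ∀ p q : ℝ, p ∈ Ioo (0 : ℝ) 1 → q ∈ Ioo (0 : ℝ) 1 → ∃ ε > (0 : ℝ),
      ∀ p₁ q₁ p₂ q₂ : ℝ,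
        p₁ ∈ Ioo (p - ε) (p + ε) ∩ Ioo (0 : ℝ) 1 → q₁ ∈ Ioo (p - ε) (p + ε) ∩ Ioo (0 : ℝ) 1 →
        p₁ < q₁ →
        p₂ ∈ Ioo (q - ε) (q + ε) ∩ Ioo (0 : ℝ) 1 → q₂ ∈ Ioo (q - ε) (q + ε) ∩ Ioo (0 : ℝ) 1 →
        p₂ < q₂ →
        condCov P (quantileSet P X Y p₁ q₁ p₂ q₂) X Y = 0) :
    IndepFun X Y P := by
  have hφ : Measurable (fun ω => (X ω, Y ω)) := hX.prodMk hY
  have hPX : IsProbabilityMeasure (P.map X) := Measure.isProbabilityMeasure_map hX.aemeasurable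
  have hPY : IsProbabilityMeasure (P.map Y) := Measure.isProbabilityMeasure_map hY.aemeasurable
  -- null singletons and positive open intervals for the marginals
  have habs : ∀ s : Set (ℝ × ℝ), MeasurableSet s → (volume : Measure (ℝ × ℝ)) s = 0 →
      Measure.map (fun ω => (X ω, Y ω)) P s = 0 := by
    intro s hms hvs
    rw [hf_law]
    exact withDensity_absolutelyContinuous _ _ hvs
  have hsingX : ∀ x : ℝ, (P.map X) {x} = 0 := by
    intro x
    rw [Measure.map_apply hX (measurableSet_singleton x)]
    have hpre : X ⁻¹' {x} = (fun ω => (X ω, Y ω)) ⁻¹' ({x} ×ˢ (univ : Set ℝ)) := by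
      ext ω; simp [eq_comm]
    rw [hpre, ← Measure.map_apply hφ ((measurableSet_singleton x).prod MeasurableSet.univ)]
    apply habs _ ((measurableSet_singleton x).prod MeasurableSet.univ)
    rw [Measure.volume_eq_prod, Measure.prod_prod, Real.volume_singleton, zero_mul]
  have hsingY : ∀ y : ℝ, (P.map Y) {y} = 0 := by
    intro y
    rw [Measure.map_apply hY (measurableSet_singleton y)]
    have hpre : Y ⁻¹' {y} = (fun ω => (X ω, Y ω)) ⁻¹' ((univ : Set ℝ) ×ˢ {y}) := by
      ext ω; simp [eq_comm]
    rw [hpre, ← Measure.map_apply hφ (MeasurableSet.univ.prod (measurableSet_singleton y))]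
    apply habs _ (MeasurableSet.univ.prod (measurableSet_singleton y))
    rw [Measure.volume_eq_prod, Measure.prod_prod, Real.volume_singleton, mul_zero]
  have hIooX : ∀ a b : ℝ, a < b → 0 < (P.map X) (Ioo a b) := by
    intro a b hab
    rw [Measure.map_apply hX measurableSet_Ioo]
    have hpre : X ⁻¹' Ioo a b = (fun ω => (X ω, Y ω)) ⁻¹' (Ioo a b ×ˢ (univ : Set ℝ)) := by
      ext ω; simp [eq_comm]
    rw [hpre, ← Measure.map_apply hφ (measurableSet_Ioo.prod MeasurableSet.univ), hf_law]
    exact pos_of_open hf_cont hf_pos (isOpen_Ioo.prod isOpen_univ)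
      ((nonempty_Ioo.mpr hab).prod univ_nonempty)
  have hIooY : ∀ a b : ℝ, a < b → 0 < (P.map Y) (Ioo a b) := by
    intro a b hab
    rw [Measure.map_apply hY measurableSet_Ioo]
    have hpre : Y ⁻¹' Ioo a b = (fun ω => (X ω, Y ω)) ⁻¹' ((univ : Set ℝ) ×ˢ Ioo a b) := by
      ext ω; simp [eq_comm]
    rw [hpre, ← Measure.map_apply hφ (MeasurableSet.univ.prod measurableSet_Ioo), hf_law]
    exact pos_of_open hf_cont hf_pos (isOpen_univ.prod isOpen_Ioo)
      (univ_nonempty.prod (nonempty_Ioo.mpr hab))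
  -- identify cdfOf with the mathlib cdf
  have hcdfX_eq : ∀ x, cdfOf P X x = cdf (P.map X) x := by
    intro x
    rw [cdf_eq_real, measureReal_def, Measure.map_apply hX measurableSet_Iic]
    rfl
  have hcdfY_eq : ∀ y, cdfOf P Y y = cdf (P.map Y) y := by
    intro y
    rw [cdf_eq_real, measureReal_def, Measure.map_apply hY measurableSet_Iic]
    rfl
  have hXmono : StrictMono (cdfOf P X) := by
    intro x y hxy
    rw [hcdfX_eq, hcdfX_eq]
    exact cdf_lt_cdf hIooX hxy
  have hYmono : StrictMono (cdfOf P Y) := by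
    intro x y hxy
    rw [hcdfY_eq, hcdfY_eq]
    exact cdf_lt_cdf hIooY hxy
  have hXq : ∀ x, quantileOf P X (cdfOf P X x) = x :=
    fun x => Function.leftInverse_invFun hXmono.injective x
  have hYq : ∀ y, quantileOf P Y (cdfOf P Y y) = y :=
    fun y => Function.leftInverse_invFun hYmono.injective y
  have hXcont : Continuous (cdfOf P X) := by
    have : cdfOf P X = fun x => cdf (P.map X) x := funext hcdfX_eq
    rw [this]
    exact cdf_continuous hsingX
  have hYcont : Continuous (cdfOf P Y) := by
    have : cdfOf P Y = fun y => cdf (P.map Y) y := funext hcdfY_eq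
    rw [this]
    exact cdf_continuous hsingY
  have hXIoo : ∀ x, cdfOf P X x ∈ Ioo (0:ℝ) 1 := by
    intro x; rw [hcdfX_eq]; exact cdf_mem_Ioo hIooX x
  have hYIoo : ∀ y, cdfOf P Y y ∈ Ioo (0:ℝ) 1 := by
    intro y; rw [hcdfY_eq]; exact cdf_mem_Ioo hIooY y
  -- local windows with the rectangle rule
  have hwin : ∀ z : ℝ × ℝ, ∃ U V : Set ℝ, IsOpen U ∧ IsOpen V ∧ z.1 ∈ U ∧ z.2 ∈ V ∧
      ∀ x ∈ U, ∀ x' ∈ U, ∀ y ∈ V, ∀ y' ∈ V, f (x', y') * f (x, y) = f (x, y') * f (x', y) := by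
    rintro ⟨x₀, y₀⟩
    obtain ⟨ε, hε, hcov⟩ := hloc (cdfOf P X x₀) (cdfOf P Y y₀) (hXIoo x₀) (hYIoo y₀)
    set p := cdfOf P X x₀ with hp
    set q := cdfOf P Y y₀ with hq
    have hW₁ : IsOpen (cdfOf P X ⁻¹' Ioo (p - ε) (p + ε)) := isOpen_Ioo.preimage hXcont
    have hW₂ : IsOpen (cdfOf P Y ⁻¹' Ioo (q - ε) (q + ε)) := isOpen_Ioo.preimage hYcont
    have hx₀ : x₀ ∈ cdfOf P X ⁻¹' Ioo (p - ε) (p + ε) := by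
      simp only [mem_preimage, mem_Ioo, ← hp]
      constructor <;> linarith
    have hy₀ : y₀ ∈ cdfOf P Y ⁻¹' Ioo (q - ε) (q + ε) := by
      simp only [mem_preimage, mem_Ioo, ← hq]
      constructor <;> linarith
    obtain ⟨r₁, hr₁, hball₁⟩ := Metric.isOpen_iff.mp hW₁ x₀ hx₀
    obtain ⟨r₂, hr₂, hball₂⟩ := Metric.isOpen_iff.mp hW₂ y₀ hy₀
    have hsub₁ : Ioo (x₀ - r₁) (x₀ + r₁) ⊆ cdfOf P X ⁻¹' Ioo (p - ε) (p + ε) := by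
      rw [← Real.ball_eq_Ioo]; exact hball₁
    have hsub₂ : Ioo (y₀ - r₂) (y₀ + r₂) ⊆ cdfOf P Y ⁻¹' Ioo (q - ε) (q + ε) := by
      rw [← Real.ball_eq_Ioo]; exact hball₂
    refine ⟨Ioo (x₀ - r₁) (x₀ + r₁), Ioo (y₀ - r₂) (y₀ + r₂), isOpen_Ioo, isOpen_Ioo,
      ⟨by linarith, by linarith⟩, ⟨by linarith, by linarith⟩, ?_⟩
    apply local_rect hf_cont
    intro s t a b hs ht hst ha hb hab
    apply cov_translate P X Y hX hY f hf_cont hf_pos hf_law hst hab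
    have hqs : quantileSet P X Y (cdfOf P X s) (cdfOf P X t) (cdfOf P Y a) (cdfOf P Y b) =
        (fun ω => (X ω, Y ω)) ⁻¹' (Icc s t ×ˢ Icc a b) := by
      unfold quantileSet
      rw [hXq s, hXq t, hYq a, hYq b]
      ext ω
      simp only [mem_inter_iff, mem_setOf_eq, mem_preimage, Set.mem_prod, mem_Icc]
    rw [← hqs]
    exact hcov (cdfOf P X s) (cdfOf P X t) (cdfOf P Y a) (cdfOf P Y b)
      ⟨hsub₁ hs, hXIoo s⟩ ⟨hsub₁ ht, hXIoo t⟩ (hXmono hst)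
      ⟨hsub₂ ha, hYIoo a⟩ ⟨hsub₂ hb, hYIoo b⟩ (hYmono hab)
  exact indep_of_rect P X Y hX hY f hf_cont hf_pos hf_law (global_rect hf_pos hwin)
end

section
/- Let X = (X₁, X₂, X₃) be a random vector whose law has a jointly continuous, strictly positive probability density function f on ℝ³. Suppose that for every choice of quantile splits 0 < pᵢ < qᵢ < 1, i = 1,2,3, and the corresponding quantile box A, the conditional covariance Cov_A[X₁, X₂] equals 0. Then for all x₁, x₂, x₃, y₁, y₂, y₃ ∈ ℝ: f(x₁,x₂,x₃)·f(y₁,y₂,y₃) − f(x₁,y₂,x₃)·f(y₁,x₂,y₃) + f(x₁,x₂,y₃)·f(y₁,y₂,x₃) − f(x₁,y₂,y₃)·f(y₁,x₂,x₃) = 0. -/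
open MeasureTheory ProbabilityTheory Set
open scoped ENNReal NNReal

noncomputable section FourTermAux

namespace FourTermAux

/-- The "interchange" map `((a,b),(c,d)) ↦ ((a,c),(b,d))` is measure preserving. -/
theorem mp_interchange {α β γ δ : Type*} [MeasurableSpace α] [MeasurableSpace β]
    [MeasurableSpace γ] [MeasurableSpace δ]
    (μa : Measure α) (μb : Measure β) (μc : Measure γ) (μd : Measure δ)
    [SFinite μa] [SFinite μb] [SFinite μc] [SFinite μd] :
    MeasurePreserving (fun p : (α × β) × (γ × δ) => ((p.1.1, p.2.1), (p.1.2, p.2.2)))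
      ((μa.prod μb).prod (μc.prod μd)) ((μa.prod μc).prod (μb.prod μd)) := by
  have hψ : MeasurePreserving (fun q : β × γ × δ => (q.2.1, (q.1, q.2.2)))
      (μb.prod (μc.prod μd)) (μc.prod (μb.prod μd)) := by
    have h1 := (measurePreserving_prodAssoc μb μc μd).symm MeasurableEquiv.prodAssoc
    have h2 := (Measure.measurePreserving_swap (μ := μb) (ν := μc)).prod (MeasurePreserving.id μd)
    have h3 := measurePreserving_prodAssoc μc μb μd
    have hcomp := (h3.comp h2).comp h1
    exact hcomp
  have h1 := measurePreserving_prodAssoc μa μb (μc.prod μd)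
  have h2 := (MeasurePreserving.id μa).prod hψ
  have h3 := (measurePreserving_prodAssoc μa μc (μb.prod μd)).symm MeasurableEquiv.prodAssoc
  have hcomp := (h3.comp h2).comp h1
  exact hcomp

/-- Swapping the first components of a pair of pairs is measure preserving. -/
theorem mp_swapFst {α β γ δ : Type*} [MeasurableSpace α] [MeasurableSpace β]
    [MeasurableSpace γ] [MeasurableSpace δ]
    (μa : Measure α) (μb : Measure β) (μc : Measure γ) (μd : Measure δ)
    [SFinite μa] [SFinite μb] [SFinite μc] [SFinite μd] :
    MeasurePreserving (fun p : (α × β) × (γ × δ) => ((p.2.1, p.1.2), (p.1.1, p.2.2)))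
      ((μa.prod μb).prod (μc.prod μd)) ((μc.prod μb).prod (μa.prod μd)) := by
  have h1 := mp_interchange μa μb μc μd
  have h2 := (Measure.measurePreserving_swap (μ := μa) (ν := μc)).prod
    (MeasurePreserving.id (μb.prod μd))
  have h3 := mp_interchange μc μa μb μd
  have hcomp := (h3.comp h2).comp h1
  exact hcomp

/-- Swapping the second components of a pair of pairs is measure preserving. -/
theorem mp_swapSnd {α β γ δ : Type*} [MeasurableSpace α] [MeasurableSpace β]
    [MeasurableSpace γ] [MeasurableSpace δ]
    (μa : Measure α) (μb : Measure β) (μc : Measure γ) (μd : Measure δ)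
    [SFinite μa] [SFinite μb] [SFinite μc] [SFinite μd] :
    MeasurePreserving (fun p : (α × β) × (γ × δ) => ((p.1.1, p.2.2), (p.2.1, p.1.2)))
      ((μa.prod μb).prod (μc.prod μd)) ((μa.prod μd).prod (μc.prod μb)) := by
  have h1 := mp_interchange μa μb μc μd
  have h2 := (MeasurePreserving.id (μa.prod μc)).prod
    (Measure.measurePreserving_swap (μ := μb) (ν := μd))
  have h3 := mp_interchange μa μc μd μb
  have hcomp := (h3.comp h2).comp h1
  exact hcomp

abbrev M3 := ℝ × ℝ × ℝ

def box (a b c d e g : ℝ) : Set M3 := Icc a b ×ˢ Icc c d ×ˢ Icc e g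

lemma box_compact (a b c d e g : ℝ) : IsCompact (box a b c d e g) :=
  isCompact_Icc.prod (isCompact_Icc.prod isCompact_Icc)

lemma box_measurable (a b c d e g : ℝ) : MeasurableSet (box a b c d e g) :=
  measurableSet_Icc.prod (measurableSet_Icc.prod measurableSet_Icc)

variable (f : M3 → ℝ)

def Df : M3 × M3 → ℝ := fun z =>
  f z.1 * f z.2 - f (z.1.1, z.2.2.1, z.1.2.2) * f (z.2.1, z.1.2.1, z.2.2.2)
  + f (z.1.1, z.1.2.1, z.2.2.2) * f (z.2.1, z.2.2.1, z.1.2.2)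
  - f (z.1.1, z.2.2.1, z.2.2.2) * f (z.2.1, z.1.2.1, z.1.2.2)

def Hs : M3 × M3 → ℝ := fun z => (z.1.1 - z.2.1) * (z.1.2.1 - z.2.2.1) * Df f z

def gf : M3 × M3 → ℝ := fun z => (z.1.1 - z.2.1) * (z.1.2.1 - z.2.2.1) * (f z.1 * f z.2)

def W (a b c d e g a' b' c' d' e' g' : ℝ) : ℝ :=
  ∫ z in box a b c d e g ×ˢ box a' b' c' d' e' g', Hs f z

def Hyp : Prop := ∀ a b c d e g : ℝ, a < b → c < d → e < g →
  (∫ z in box a b c d e g, f z) * (∫ z in box a b c d e g, f z * (z.1 * z.2.1)) =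
  (∫ z in box a b c d e g, f z * z.1) * (∫ z in box a b c d e g, f z * z.2.1)

def s1 : M3 × M3 → M3 × M3 := fun z => ((z.2.1, z.1.2.1, z.1.2.2), (z.1.1, z.2.2.1, z.2.2.2))
def s2 : M3 × M3 → M3 × M3 := fun z => ((z.1.1, z.2.2.1, z.1.2.2), (z.2.1, z.1.2.1, z.2.2.2))
def s3 : M3 × M3 → M3 × M3 := fun z => ((z.1.1, z.1.2.1, z.2.2.2), (z.2.1, z.2.2.1, z.1.2.2))

lemma mp_s1 : MeasurePreserving s1 (volume : Measure (M3 × M3)) volume := by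
  have h := mp_swapFst (volume : Measure ℝ) (volume : Measure (ℝ × ℝ))
    (volume : Measure ℝ) (volume : Measure (ℝ × ℝ))
  rw [← Measure.volume_eq_prod, ← Measure.volume_eq_prod] at h
  exact h

lemma mp_s2 : MeasurePreserving s2 (volume : Measure (M3 × M3)) volume := by
  have h1 := mp_interchange (volume : Measure ℝ) (volume : Measure (ℝ × ℝ))
    (volume : Measure ℝ) (volume : Measure (ℝ × ℝ))
  have hsw := mp_swapFst (volume : Measure ℝ) (volume : Measure ℝ)
    (volume : Measure ℝ) (volume : Measure ℝ)
  have h2 := (MeasurePreserving.id ((volume : Measure ℝ).prod (volume : Measure ℝ))).prod hsw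
  have h3 := mp_interchange (volume : Measure ℝ) (volume : Measure (ℝ × ℝ))
    (volume : Measure ℝ) (volume : Measure (ℝ × ℝ))
  -- h3 has wrong type; we need the reverse interchange
  have h3' := mp_interchange (volume : Measure ℝ) (volume : Measure ℝ)
    (volume : Measure (ℝ × ℝ)) (volume : Measure (ℝ × ℝ))
  exact (h3'.comp h2).comp h1

lemma mp_s3 : MeasurePreserving s3 (volume : Measure (M3 × M3)) volume := by
  have h1 := mp_interchange (volume : Measure ℝ) (volume : Measure (ℝ × ℝ))
    (volume : Measure ℝ) (volume : Measure (ℝ × ℝ))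
  have hsw := mp_swapSnd (volume : Measure ℝ) (volume : Measure ℝ)
    (volume : Measure ℝ) (volume : Measure ℝ)
  have h2 := (MeasurePreserving.id ((volume : Measure ℝ).prod (volume : Measure ℝ))).prod hsw
  have h3' := mp_interchange (volume : Measure ℝ) (volume : Measure ℝ)
    (volume : Measure (ℝ × ℝ)) (volume : Measure (ℝ × ℝ))
  exact (h3'.comp h2).comp h1

def e1 : M3 × M3 ≃ᵐ M3 × M3 where
  toEquiv := ⟨s1, s1, fun z => rfl, fun z => rfl⟩
  measurable_toFun := by show Measurable s1; unfold s1; fun_prop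
  measurable_invFun := by show Measurable s1; unfold s1; fun_prop

def e2 : M3 × M3 ≃ᵐ M3 × M3 where
  toEquiv := ⟨s2, s2, fun z => rfl, fun z => rfl⟩
  measurable_toFun := by show Measurable s2; unfold s2; fun_prop
  measurable_invFun := by show Measurable s2; unfold s2; fun_prop

def e3 : M3 × M3 ≃ᵐ M3 × M3 where
  toEquiv := ⟨s3, s3, fun z => rfl, fun z => rfl⟩
  measurable_toFun := by show Measurable s3; unfold s3; fun_prop
  measurable_invFun := by show Measurable s3; unfold s3; fun_prop

lemma emb_s1 : MeasurableEmbedding s1 := e1.measurableEmbedding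
lemma emb_s2 : MeasurableEmbedding s2 := e2.measurableEmbedding
lemma emb_s3 : MeasurableEmbedding s3 := e3.measurableEmbedding

lemma s1_preimage (a b c d e g a' b' c' d' e' g' : ℝ) :
    s1 ⁻¹' (box a b c d e g ×ˢ box a' b' c' d' e' g')
      = box a' b' c d e g ×ˢ box a b c' d' e' g' := by
  ext z; simp only [s1, box, Set.mem_preimage, Set.mem_prod, Set.mem_Icc]; tauto

lemma s2_preimage (a b c d e g a' b' c' d' e' g' : ℝ) :
    s2 ⁻¹' (box a b c d e g ×ˢ box a' b' c' d' e' g')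
      = box a b c' d' e g ×ˢ box a' b' c d e' g' := by
  ext z; simp only [s2, box, Set.mem_preimage, Set.mem_prod, Set.mem_Icc]; tauto

lemma s3_preimage (a b c d e g a' b' c' d' e' g' : ℝ) :
    s3 ⁻¹' (box a b c d e g ×ˢ box a' b' c' d' e' g')
      = box a b c d e' g' ×ˢ box a' b' c' d' e g := by
  ext z; simp only [s3, box, Set.mem_preimage, Set.mem_prod, Set.mem_Icc]; tauto

instance : IsFiniteMeasureOnCompacts (volume : Measure (ℝ × ℝ)) :=
  inferInstanceAs (IsFiniteMeasureOnCompacts ((volume : Measure ℝ).prod volume))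

instance : IsFiniteMeasureOnCompacts (volume : Measure M3) :=
  inferInstanceAs (IsFiniteMeasureOnCompacts ((volume : Measure ℝ).prod volume))

instance : IsFiniteMeasureOnCompacts (volume : Measure (M3 × M3)) :=
  inferInstanceAs (IsFiniteMeasureOnCompacts ((volume : Measure M3).prod volume))

lemma cont_Df (hf : Continuous f) : Continuous (Df f) := by unfold Df; fun_prop
lemma cont_Hs (hf : Continuous f) : Continuous (Hs f) := by
  unfold Hs; exact ((continuous_fst.fst.sub continuous_snd.fst).mul
    ((continuous_fst.snd.fst).sub (continuous_snd.snd.fst))).mul (cont_Df f hf)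
lemma cont_gf (hf : Continuous f) : Continuous (gf f) := by unfold gf; fun_prop

lemma intOn_boxes (h : M3 × M3 → ℝ) (hc : Continuous h) (a b c d e g a' b' c' d' e' g' : ℝ) :
    IntegrableOn h (box a b c d e g ×ˢ box a' b' c' d' e' g') volume :=
  hc.continuousOn.integrableOn_compact
    ((box_compact a b c d e g).prod (box_compact a' b' c' d' e' g'))

lemma vol_boxprod (a b c d e g a' b' c' d' e' g' : ℝ) :
    volume (box a b c d e g ×ˢ box a' b' c' d' e' g')
      = ENNReal.ofReal (b - a) * (ENNReal.ofReal (d - c) * ENNReal.ofReal (g - e)) *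
        (ENNReal.ofReal (b' - a') * (ENNReal.ofReal (d' - c') * ENNReal.ofReal (g' - e'))) := by
  have hv : (volume : Measure (M3 × M3)) =
      ((volume : Measure ℝ).prod ((volume : Measure ℝ).prod (volume : Measure ℝ))).prod
        (((volume : Measure ℝ)).prod ((volume : Measure ℝ).prod (volume : Measure ℝ))) := rfl
  simp only [box]
  rw [hv, Measure.prod_prod, Measure.prod_prod, Measure.prod_prod, Measure.prod_prod,
    Measure.prod_prod]
  simp only [Real.volume_Icc]

lemma Hs_s1 (z : M3 × M3) : Hs f (s1 z) = Hs f z := by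
  obtain ⟨⟨x1, x2, x3⟩, ⟨y1, y2, y3⟩⟩ := z
  simp only [Hs, Df, s1]; ring

lemma Hs_s2 (z : M3 × M3) : Hs f (s2 z) = Hs f z := by
  obtain ⟨⟨x1, x2, x3⟩, ⟨y1, y2, y3⟩⟩ := z
  simp only [Hs, Df, s2]; ring

lemma Hs_s3 (z : M3 × M3) : Hs f (s3 z) = Hs f z := by
  obtain ⟨⟨x1, x2, x3⟩, ⟨y1, y2, y3⟩⟩ := z
  simp only [Hs, Df, s3]; ring

lemma move1 (h : M3 × M3 → ℝ) (a b c d e g a' b' c' d' e' g' : ℝ) :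
    ∫ z in box a' b' c d e g ×ˢ box a b c' d' e' g', h (s1 z)
      = ∫ z in box a b c d e g ×ˢ box a' b' c' d' e' g', h z := by
  rw [← s1_preimage]; exact mp_s1.setIntegral_preimage_emb emb_s1 h _

lemma move2 (h : M3 × M3 → ℝ) (a b c d e g a' b' c' d' e' g' : ℝ) :
    ∫ z in box a b c' d' e g ×ˢ box a' b' c d e' g', h (s2 z)
      = ∫ z in box a b c d e g ×ˢ box a' b' c' d' e' g', h z := by
  rw [← s2_preimage]; exact mp_s2.setIntegral_preimage_emb emb_s2 h _

lemma move3 (h : M3 × M3 → ℝ) (a b c d e g a' b' c' d' e' g' : ℝ) :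
    ∫ z in box a b c d e' g' ×ˢ box a' b' c' d' e g, h (s3 z)
      = ∫ z in box a b c d e g ×ˢ box a' b' c' d' e' g', h z := by
  rw [← s3_preimage]; exact mp_s3.setIntegral_preimage_emb emb_s3 h _

lemma W_symm1 (a b c d e g a' b' c' d' e' g' : ℝ) :
    W f a b c d e g a' b' c' d' e' g' = W f a' b' c d e g a b c' d' e' g' := by
  unfold W
  rw [← move1 (Hs f) a b c d e g a' b' c' d' e' g']
  simp only [Hs_s1]

lemma W_symm2 (a b c d e g a' b' c' d' e' g' : ℝ) :
    W f a b c d e g a' b' c' d' e' g' = W f a b c' d' e g a' b' c d e' g' := by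
  unfold W
  rw [← move2 (Hs f) a b c d e g a' b' c' d' e' g']
  simp only [Hs_s2]

lemma W_symm3 (a b c d e g a' b' c' d' e' g' : ℝ) :
    W f a b c d e g a' b' c' d' e' g' = W f a b c d e' g' a' b' c' d' e g := by
  unfold W
  rw [← move3 (Hs f) a b c d e g a' b' c' d' e' g']
  simp only [Hs_s3]

lemma W_add1 (hf : Continuous f) {a m b : ℝ} (h1 : a ≤ m) (h2 : m ≤ b)
    (c d e g a' b' c' d' e' g' : ℝ) :
    W f a b c d e g a' b' c' d' e' g'
      = W f a m c d e g a' b' c' d' e' g' + W f m b c d e g a' b' c' d' e' g' := by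
  unfold W
  have hset : box a b c d e g ×ˢ box a' b' c' d' e' g'
      = box a m c d e g ×ˢ box a' b' c' d' e' g'
        ∪ box m b c d e g ×ˢ box a' b' c' d' e' g' := by
    simp only [box]
    rw [← Set.Icc_union_Icc_eq_Icc h1 h2, Set.union_prod, Set.union_prod]
  rw [hset]
  refine integral_union_ae ?_ ?_ (intOn_boxes (Hs f) (cont_Hs f hf) _ _ _ _ _ _ _ _ _ _ _ _)
    (intOn_boxes (Hs f) (cont_Hs f hf) _ _ _ _ _ _ _ _ _ _ _ _)
  · show volume _ = 0
    apply measure_mono_null (t := ({m} ×ˢ (Icc c d ×ˢ Icc e g)) ×ˢ box a' b' c' d' e' g')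
    · rintro z ⟨⟨⟨⟨_, hz2⟩, hz3⟩, hz4⟩, ⟨⟨⟨hz5, _⟩, _⟩, _⟩⟩
      exact ⟨⟨le_antisymm hz2 hz5, hz3⟩, hz4⟩
    · have hv : (volume : Measure (M3 × M3)) =
          ((volume : Measure ℝ).prod ((volume : Measure ℝ).prod (volume : Measure ℝ))).prod
            (((volume : Measure ℝ)).prod ((volume : Measure ℝ).prod (volume : Measure ℝ))) := rfl
      simp only [box]
      rw [hv, Measure.prod_prod, Measure.prod_prod, Real.volume_singleton]
      simp
  · exact ((box_measurable _ _ _ _ _ _).prod (box_measurable _ _ _ _ _ _)).nullMeasurableSet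

lemma W_add2 (hf : Continuous f) {c m d : ℝ} (h1 : c ≤ m) (h2 : m ≤ d)
    (a b e g a' b' c' d' e' g' : ℝ) :
    W f a b c d e g a' b' c' d' e' g'
      = W f a b c m e g a' b' c' d' e' g' + W f a b m d e g a' b' c' d' e' g' := by
  unfold W
  have hset : box a b c d e g ×ˢ box a' b' c' d' e' g'
      = box a b c m e g ×ˢ box a' b' c' d' e' g'
        ∪ box a b m d e g ×ˢ box a' b' c' d' e' g' := by
    simp only [box]
    rw [← Set.Icc_union_Icc_eq_Icc h1 h2, Set.union_prod, Set.prod_union, Set.union_prod]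
  rw [hset]
  refine integral_union_ae ?_ ?_ (intOn_boxes (Hs f) (cont_Hs f hf) _ _ _ _ _ _ _ _ _ _ _ _)
    (intOn_boxes (Hs f) (cont_Hs f hf) _ _ _ _ _ _ _ _ _ _ _ _)
  · show volume _ = 0
    apply measure_mono_null (t := (Icc a b ×ˢ ({m} ×ˢ Icc e g)) ×ˢ box a' b' c' d' e' g')
    · rintro z ⟨⟨⟨hz1, ⟨⟨_, hz2⟩, hz3⟩⟩, hz4⟩, ⟨⟨_, ⟨⟨hz5, _⟩, _⟩⟩, _⟩⟩
      exact ⟨⟨hz1, ⟨le_antisymm hz2 hz5, hz3⟩⟩, hz4⟩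
    · have hv : (volume : Measure (M3 × M3)) =
          ((volume : Measure ℝ).prod ((volume : Measure ℝ).prod (volume : Measure ℝ))).prod
            (((volume : Measure ℝ)).prod ((volume : Measure ℝ).prod (volume : Measure ℝ))) := rfl
      simp only [box]
      rw [hv, Measure.prod_prod, Measure.prod_prod, Measure.prod_prod, Real.volume_singleton]
      simp
  · exact ((box_measurable _ _ _ _ _ _).prod (box_measurable _ _ _ _ _ _)).nullMeasurableSet

lemma W_add3 (hf : Continuous f) {e m g : ℝ} (h1 : e ≤ m) (h2 : m ≤ g)
    (a b c d a' b' c' d' e' g' : ℝ) :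
    W f a b c d e g a' b' c' d' e' g'
      = W f a b c d e m a' b' c' d' e' g' + W f a b c d m g a' b' c' d' e' g' := by
  unfold W
  have hset : box a b c d e g ×ˢ box a' b' c' d' e' g'
      = box a b c d e m ×ˢ box a' b' c' d' e' g'
        ∪ box a b c d m g ×ˢ box a' b' c' d' e' g' := by
    simp only [box]
    rw [← Set.Icc_union_Icc_eq_Icc h1 h2, Set.prod_union, Set.prod_union, Set.union_prod]
  rw [hset]
  refine integral_union_ae ?_ ?_ (intOn_boxes (Hs f) (cont_Hs f hf) _ _ _ _ _ _ _ _ _ _ _ _)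
    (intOn_boxes (Hs f) (cont_Hs f hf) _ _ _ _ _ _ _ _ _ _ _ _)
  · show volume _ = 0
    apply measure_mono_null (t := (Icc a b ×ˢ (Icc c d ×ˢ {m})) ×ˢ box a' b' c' d' e' g')
    · rintro z ⟨⟨⟨hz1, ⟨hz2, ⟨_, hz3⟩⟩⟩, hz4⟩, ⟨⟨_, ⟨_, ⟨hz5, _⟩⟩⟩, _⟩⟩
      exact ⟨⟨hz1, ⟨hz2, le_antisymm hz3 hz5⟩⟩, hz4⟩
    · have hv : (volume : Measure (M3 × M3)) =
          ((volume : Measure ℝ).prod ((volume : Measure ℝ).prod (volume : Measure ℝ))).prod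
            (((volume : Measure ℝ)).prod ((volume : Measure ℝ).prod (volume : Measure ℝ))) := rfl
      simp only [box]
      rw [hv, Measure.prod_prod, Measure.prod_prod, Measure.prod_prod, Real.volume_singleton]
      simp
  · exact ((box_measurable _ _ _ _ _ _).prod (box_measurable _ _ _ _ _ _)).nullMeasurableSet

lemma W_add1' (hf : Continuous f) {a' m b' : ℝ} (h1 : a' ≤ m) (h2 : m ≤ b')
    (a b c d e g c' d' e' g' : ℝ) :
    W f a b c d e g a' b' c' d' e' g'
      = W f a b c d e g a' m c' d' e' g' + W f a b c d e g m b' c' d' e' g' := by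
  rw [W_symm1 f a b c d e g a' b' c' d' e' g', W_add1 f hf h1 h2,
    W_symm1 f a' m c d e g a b c' d' e' g', W_symm1 f m b' c d e g a b c' d' e' g']

lemma W_add2' (hf : Continuous f) {c' m d' : ℝ} (h1 : c' ≤ m) (h2 : m ≤ d')
    (a b c d e g a' b' e' g' : ℝ) :
    W f a b c d e g a' b' c' d' e' g'
      = W f a b c d e g a' b' c' m e' g' + W f a b c d e g a' b' m d' e' g' := by
  rw [W_symm2 f a b c d e g a' b' c' d' e' g', W_add2 f hf h1 h2,
    W_symm2 f a b c' m e g a' b' c d e' g', W_symm2 f a b m d' e g a' b' c d e' g']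

lemma W_add3' (hf : Continuous f) {e' m g' : ℝ} (h1 : e' ≤ m) (h2 : m ≤ g')
    (a b c d e g a' b' c' d' : ℝ) :
    W f a b c d e g a' b' c' d' e' g'
      = W f a b c d e g a' b' c' d' e' m + W f a b c d e g a' b' c' d' m g' := by
  rw [W_symm3 f a b c d e g a' b' c' d' e' g', W_add3 f hf h1 h2,
    W_symm3 f a b c d e' m a' b' c' d' e g, W_symm3 f a b c d m g' a' b' c' d' e g]

lemma two_Hs (z : M3 × M3) : 2 * Hs f z
    = gf f z + gf f (s1 z) + (gf f (s2 z) + gf f (s3 z))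
      + (gf f (s1 (s2 z)) + gf f (s1 (s3 z)) + (gf f (s2 (s3 z)) + gf f (s1 (s2 (s3 z))))) := by
  obtain ⟨⟨x1, x2, x3⟩, ⟨y1, y2, y3⟩⟩ := z
  simp only [Hs, Df, gf, s1, s2, s3]
  ring

lemma diag_gf (hf : Continuous f) (a b c d e g : ℝ) :
    ∫ z in box a b c d e g ×ˢ box a b c d e g, gf f z
      = 2 * ((∫ z in box a b c d e g, f z) * (∫ z in box a b c d e g, f z * (z.1 * z.2.1))
        - (∫ z in box a b c d e g, f z * z.1) * (∫ z in box a b c d e g, f z * z.2.1)) := by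
  have hrw : (volume : Measure (M3 × M3)).restrict (box a b c d e g ×ˢ box a b c d e g)
      = ((volume : Measure M3).restrict (box a b c d e g)).prod
        ((volume : Measure M3).restrict (box a b c d e g)) := by
    rw [Measure.prod_restrict, ← Measure.volume_eq_prod]
  have h0 : Integrable (fun z : M3 => f z) ((volume : Measure M3).restrict (box a b c d e g)) :=
    hf.continuousOn.integrableOn_compact (box_compact _ _ _ _ _ _)
  have h1 : Integrable (fun z : M3 => f z * z.1)
      ((volume : Measure M3).restrict (box a b c d e g)) :=
    (Continuous.continuousOn (by fun_prop)).integrableOn_compact (box_compact _ _ _ _ _ _)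
  have h2 : Integrable (fun z : M3 => f z * z.2.1)
      ((volume : Measure M3).restrict (box a b c d e g)) :=
    (Continuous.continuousOn (by fun_prop)).integrableOn_compact (box_compact _ _ _ _ _ _)
  have h12 : Integrable (fun z : M3 => f z * (z.1 * z.2.1))
      ((volume : Measure M3).restrict (box a b c d e g)) :=
    (Continuous.continuousOn (by fun_prop)).integrableOn_compact (box_compact _ _ _ _ _ _)
  set ρ := (volume : Measure M3).restrict (box a b c d e g) with hρ
  show ∫ z, gf f z ∂((volume : Measure (M3 × M3)).restrict (box a b c d e g ×ˢ box a b c d e g))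
      = _
  rw [hrw]
  have hexp : (fun z : M3 × M3 => gf f z)
      = fun z : M3 × M3 => ((f z.1 * (z.1.1 * z.1.2.1)) * f z.2
          - (f z.1 * z.1.1) * (f z.2 * z.2.2.1))
          - (f z.1 * z.1.2.1) * (f z.2 * z.2.1)
          + f z.1 * (f z.2 * (z.2.1 * z.2.2.1)) := by
    funext z; simp only [gf]; ring
  rw [hexp]
  have iA : Integrable (fun z : M3 × M3 => (f z.1 * (z.1.1 * z.1.2.1)) * f z.2) (ρ.prod ρ) :=
    h12.mul_prod h0
  have iB : Integrable (fun z : M3 × M3 => (f z.1 * z.1.1) * (f z.2 * z.2.2.1)) (ρ.prod ρ) :=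
    h1.mul_prod h2
  have iC : Integrable (fun z : M3 × M3 => (f z.1 * z.1.2.1) * (f z.2 * z.2.1)) (ρ.prod ρ) :=
    h2.mul_prod h1
  have iD : Integrable (fun z : M3 × M3 => f z.1 * (f z.2 * (z.2.1 * z.2.2.1))) (ρ.prod ρ) :=
    h0.mul_prod h12
  have iAB : Integrable (fun z : M3 × M3 =>
      (f z.1 * (z.1.1 * z.1.2.1)) * f z.2 - (f z.1 * z.1.1) * (f z.2 * z.2.2.1)) (ρ.prod ρ) :=
    iA.sub iB
  have iABC : Integrable (fun z : M3 × M3 =>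
      (f z.1 * (z.1.1 * z.1.2.1)) * f z.2 - (f z.1 * z.1.1) * (f z.2 * z.2.2.1)
        - (f z.1 * z.1.2.1) * (f z.2 * z.2.1)) (ρ.prod ρ) := iAB.sub iC
  rw [integral_add iABC iD, integral_sub iAB iC, integral_sub iA iB]
  have eA : (∫ z : M3 × M3, (f z.1 * (z.1.1 * z.1.2.1)) * f z.2 ∂(ρ.prod ρ))
      = (∫ w, f w * (w.1 * w.2.1) ∂ρ) * ∫ w, f w ∂ρ :=
    integral_prod_mul (fun w : M3 => f w * (w.1 * w.2.1)) (fun w : M3 => f w)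
  have eB : (∫ z : M3 × M3, (f z.1 * z.1.1) * (f z.2 * z.2.2.1) ∂(ρ.prod ρ))
      = (∫ w, f w * w.1 ∂ρ) * ∫ w, f w * w.2.1 ∂ρ :=
    integral_prod_mul (fun w : M3 => f w * w.1) (fun w : M3 => f w * w.2.1)
  have eC : (∫ z : M3 × M3, (f z.1 * z.1.2.1) * (f z.2 * z.2.1) ∂(ρ.prod ρ))
      = (∫ w, f w * w.2.1 ∂ρ) * ∫ w, f w * w.1 ∂ρ :=
    integral_prod_mul (fun w : M3 => f w * w.2.1) (fun w : M3 => f w * w.1)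
  have eD : (∫ z : M3 × M3, f z.1 * (f z.2 * (z.2.1 * z.2.2.1)) ∂(ρ.prod ρ))
      = (∫ w, f w ∂ρ) * ∫ w, f w * (w.1 * w.2.1) ∂ρ :=
    integral_prod_mul (fun w : M3 => f w) (fun w : M3 => f w * (w.1 * w.2.1))
  rw [eA, eB, eC, eD]
  ring

lemma cont_s1 : Continuous s1 := by unfold s1; fun_prop
lemma cont_s2 : Continuous s2 := by unfold s2; fun_prop
lemma cont_s3 : Continuous s3 := by unfold s3; fun_prop

lemma diag_W (hf : Continuous f) (hyp : Hyp f) (a b c d e g : ℝ) :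
    W f a b c d e g a b c d e g = 0 := by
  by_cases hab : a < b
  · by_cases hcd : c < d
    · by_cases heg : e < g
      · have hg0 : ∫ z in box a b c d e g ×ˢ box a b c d e g, gf f z = 0 := by
          rw [diag_gf f hf, hyp a b c d e g hab hcd heg]; ring
        set E := box a b c d e g ×ˢ box a b c d e g with hE
        have m1 : ∫ z in E, gf f (s1 z) = ∫ z in E, gf f z :=
          move1 (gf f) a b c d e g a b c d e g
        have m2 : ∫ z in E, gf f (s2 z) = ∫ z in E, gf f z :=
          move2 (gf f) a b c d e g a b c d e g
        have m3 : ∫ z in E, gf f (s3 z) = ∫ z in E, gf f z :=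
          move3 (gf f) a b c d e g a b c d e g
        have m12 : ∫ z in E, gf f (s1 (s2 z)) = ∫ z in E, gf f z :=
          (move2 (fun w => gf f (s1 w)) a b c d e g a b c d e g).trans m1
        have m13 : ∫ z in E, gf f (s1 (s3 z)) = ∫ z in E, gf f z :=
          (move3 (fun w => gf f (s1 w)) a b c d e g a b c d e g).trans m1
        have m23 : ∫ z in E, gf f (s2 (s3 z)) = ∫ z in E, gf f z :=
          (move3 (fun w => gf f (s2 w)) a b c d e g a b c d e g).trans m2
        have m123 : ∫ z in E, gf f (s1 (s2 (s3 z))) = ∫ z in E, gf f z :=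
          (move3 (fun w => gf f (s1 (s2 w))) a b c d e g a b c d e g).trans m12
        have ig : IntegrableOn (fun z => gf f z) E volume :=
          intOn_boxes (gf f) (cont_gf f hf) a b c d e g a b c d e g
        have ig1 : IntegrableOn (fun z => gf f (s1 z)) E volume :=
          intOn_boxes _ ((cont_gf f hf).comp cont_s1) a b c d e g a b c d e g
        have ig2 : IntegrableOn (fun z => gf f (s2 z)) E volume :=
          intOn_boxes _ ((cont_gf f hf).comp cont_s2) a b c d e g a b c d e g
        have ig3 : IntegrableOn (fun z => gf f (s3 z)) E volume :=
          intOn_boxes _ ((cont_gf f hf).comp cont_s3) a b c d e g a b c d e g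
        have ig12 : IntegrableOn (fun z => gf f (s1 (s2 z))) E volume :=
          intOn_boxes _ (((cont_gf f hf).comp cont_s1).comp cont_s2) a b c d e g a b c d e g
        have ig13 : IntegrableOn (fun z => gf f (s1 (s3 z))) E volume :=
          intOn_boxes _ (((cont_gf f hf).comp cont_s1).comp cont_s3) a b c d e g a b c d e g
        have ig23 : IntegrableOn (fun z => gf f (s2 (s3 z))) E volume :=
          intOn_boxes _ (((cont_gf f hf).comp cont_s2).comp cont_s3) a b c d e g a b c d e g
        have ig123 : IntegrableOn (fun z => gf f (s1 (s2 (s3 z)))) E volume :=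
          intOn_boxes _ ((((cont_gf f hf).comp cont_s1).comp cont_s2).comp cont_s3)
            a b c d e g a b c d e g
        have iP1 : IntegrableOn (fun z => gf f z + gf f (s1 z)) E volume := ig.add ig1
        have iP2 : IntegrableOn (fun z => gf f (s2 z) + gf f (s3 z)) E volume := ig2.add ig3
        have iP : IntegrableOn
            (fun z => gf f z + gf f (s1 z) + (gf f (s2 z) + gf f (s3 z))) E volume := iP1.add iP2
        have iQ1 : IntegrableOn (fun z => gf f (s1 (s2 z)) + gf f (s1 (s3 z))) E volume :=
          ig12.add ig13
        have iQ2 : IntegrableOn (fun z => gf f (s2 (s3 z)) + gf f (s1 (s2 (s3 z)))) E volume :=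
          ig23.add ig123
        have iQ : IntegrableOn (fun z => gf f (s1 (s2 z)) + gf f (s1 (s3 z))
            + (gf f (s2 (s3 z)) + gf f (s1 (s2 (s3 z))))) E volume := iQ1.add iQ2
        have hsum : ∫ z in E, (2 : ℝ) * Hs f z = 8 * ∫ z in E, gf f z := by
          have h2H : (fun z : M3 × M3 => (2 : ℝ) * Hs f z)
              = fun z => gf f z + gf f (s1 z) + (gf f (s2 z) + gf f (s3 z))
                + (gf f (s1 (s2 z)) + gf f (s1 (s3 z))
                  + (gf f (s2 (s3 z)) + gf f (s1 (s2 (s3 z))))) := by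
            funext z; exact two_Hs f z
          rw [h2H, integral_add iP iQ, integral_add iP1 iP2, integral_add ig ig1,
            integral_add ig2 ig3, integral_add iQ1 iQ2, integral_add ig12 ig13,
            integral_add ig23 ig123, m1, m2, m3, m12, m13, m23, m123]
          ring
        have hW2 : ∫ z in E, (2 : ℝ) * Hs f z = 2 * W f a b c d e g a b c d e g := by
          rw [integral_const_mul]; rfl
        have : 2 * W f a b c d e g a b c d e g = 8 * (0 : ℝ) := by
          rw [← hW2, hsum, hg0]
        linarith
      · have hv : volume (box a b c d e g ×ˢ box a b c d e g) = 0 := by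
          rw [vol_boxprod, ENNReal.ofReal_eq_zero.mpr (by linarith : g - e ≤ 0)]; simp
        exact setIntegral_measure_zero _ hv
    · have hv : volume (box a b c d e g ×ˢ box a b c d e g) = 0 := by
        rw [vol_boxprod, ENNReal.ofReal_eq_zero.mpr (by linarith : d - c ≤ 0)]; simp
      exact setIntegral_measure_zero _ hv
  · have hv : volume (box a b c d e g ×ˢ box a b c d e g) = 0 := by
      rw [vol_boxprod, ENNReal.ofReal_eq_zero.mpr (by linarith : b - a ≤ 0)]; simp
    exact setIntegral_measure_zero _ hv

lemma step1a (hf : Continuous f) (hyp : Hyp f) {a m b : ℝ} (h1 : a ≤ m) (h2 : m ≤ b)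
    (c d e g : ℝ) : W f a m c d e g m b c d e g = 0 := by
  have h0 := diag_W f hf hyp a b c d e g
  rw [W_add1 f hf h1 h2, W_add1' f hf h1 h2, W_add1' f hf h1 h2] at h0
  have d1 := diag_W f hf hyp a m c d e g
  have d2 := diag_W f hf hyp m b c d e g
  have hsym := W_symm1 f m b c d e g a m c d e g
  linarith

lemma step1b (hf : Continuous f) (hyp : Hyp f) {a1 a2 b1 b2 : ℝ}
    (h1 : a1 ≤ a2) (h2 : a2 ≤ b1) (h3 : b1 ≤ b2) (c d e g : ℝ) :
    W f a1 a2 c d e g b1 b2 c d e g = 0 := by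
  have hA := step1a f hf hyp h1 (h2.trans h3) c d e g
  have hB := step1a f hf hyp h1 h2 c d e g
  have hadd := W_add1' f hf h2 h3 a1 a2 c d e g c d e g
  linarith

lemma step2a (hf : Continuous f) (hyp : Hyp f) {a1 a2 b1 b2 : ℝ}
    (h1 : a1 ≤ a2) (h2 : a2 ≤ b1) (h3 : b1 ≤ b2) {c m d : ℝ} (hc1 : c ≤ m) (hc2 : m ≤ d)
    (e g : ℝ) : W f a1 a2 c m e g b1 b2 m d e g = 0 := by
  have h0 := step1b f hf hyp h1 h2 h3 c d e g
  rw [W_add2 f hf hc1 hc2, W_add2' f hf hc1 hc2, W_add2' f hf hc1 hc2] at h0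
  have d1 := step1b f hf hyp h1 h2 h3 c m e g
  have d2 := step1b f hf hyp h1 h2 h3 m d e g
  have hsym := W_symm2 f a1 a2 m d e g b1 b2 c m e g
  linarith

lemma step2b (hf : Continuous f) (hyp : Hyp f) {a1 a2 b1 b2 : ℝ}
    (h1 : a1 ≤ a2) (h2 : a2 ≤ b1) (h3 : b1 ≤ b2) {c1 c2 d1 d2 : ℝ}
    (hc1 : c1 ≤ c2) (hc2 : c2 ≤ d1) (hc3 : d1 ≤ d2) (e g : ℝ) :
    W f a1 a2 c1 c2 e g b1 b2 d1 d2 e g = 0 := by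
  have hA := step2a f hf hyp h1 h2 h3 hc1 (hc2.trans hc3) e g
  have hB := step2a f hf hyp h1 h2 h3 hc1 hc2 e g
  have hadd := W_add2' f hf hc2 hc3 a1 a2 c1 c2 e g b1 b2 e g
  linarith

lemma step3a (hf : Continuous f) (hyp : Hyp f) {a1 a2 b1 b2 : ℝ}
    (h1 : a1 ≤ a2) (h2 : a2 ≤ b1) (h3 : b1 ≤ b2) {c1 c2 d1 d2 : ℝ}
    (hc1 : c1 ≤ c2) (hc2 : c2 ≤ d1) (hc3 : d1 ≤ d2) {e m g : ℝ}
    (he1 : e ≤ m) (he2 : m ≤ g) :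
    W f a1 a2 c1 c2 e m b1 b2 d1 d2 m g = 0 := by
  have h0 := step2b f hf hyp h1 h2 h3 hc1 hc2 hc3 e g
  rw [W_add3 f hf he1 he2, W_add3' f hf he1 he2, W_add3' f hf he1 he2] at h0
  have hd1 := step2b f hf hyp h1 h2 h3 hc1 hc2 hc3 e m
  have hd2 := step2b f hf hyp h1 h2 h3 hc1 hc2 hc3 m g
  have hsym := W_symm3 f a1 a2 c1 c2 m g b1 b2 d1 d2 e m
  linarith

lemma step3b (hf : Continuous f) (hyp : Hyp f) {a1 a2 b1 b2 : ℝ}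
    (h1 : a1 ≤ a2) (h2 : a2 ≤ b1) (h3 : b1 ≤ b2) {c1 c2 d1 d2 : ℝ}
    (hc1 : c1 ≤ c2) (hc2 : c2 ≤ d1) (hc3 : d1 ≤ d2) {e1 e2 g1 g2 : ℝ}
    (he1 : e1 ≤ e2) (he2 : e2 ≤ g1) (he3 : g1 ≤ g2) :
    W f a1 a2 c1 c2 e1 e2 b1 b2 d1 d2 g1 g2 = 0 := by
  have hA := step3a f hf hyp h1 h2 h3 hc1 hc2 hc3 he1 (he2.trans he3)
  have hB := step3a f hf hyp h1 h2 h3 hc1 hc2 hc3 he1 he2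
  have hadd := W_add3' f hf he2 he3 a1 a2 c1 c2 e1 e2 b1 b2 d1 d2
  linarith

lemma vanish_Hs (hf : Continuous f) (x1 x2 x3 y1 y2 y3 εmax : ℝ) (hεmax : 0 < εmax)
    (hvan : ∀ ε : ℝ, 0 < ε → ε < εmax →
      W f (x1-ε) (x1+ε) (x2-ε) (x2+ε) (x3-ε) (x3+ε)
        (y1-ε) (y1+ε) (y2-ε) (y2+ε) (y3-ε) (y3+ε) = 0) :
    Hs f ((x1, x2, x3), (y1, y2, y3)) = 0 := by
  by_contra hne
  have hc : 0 < |Hs f ((x1, x2, x3), (y1, y2, y3))| / 2 := by positivity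
  obtain ⟨δ, hδpos, hball⟩ := Metric.continuous_iff.mp (cont_Hs f hf)
    ((x1, x2, x3), (y1, y2, y3)) (|Hs f ((x1, x2, x3), (y1, y2, y3))| / 2) hc
  set ε := min (δ/2) (εmax/2) with hεdef
  have hεpos : 0 < ε := lt_min (by linarith) (by linarith)
  have hεδ : ε < δ := lt_of_le_of_lt (min_le_left _ _) (by linarith)
  have hεmax' : ε < εmax := lt_of_le_of_lt (min_le_right _ _) (by linarith)
  set E := box (x1-ε) (x1+ε) (x2-ε) (x2+ε) (x3-ε) (x3+ε)
    ×ˢ box (y1-ε) (y1+ε) (y2-ε) (y2+ε) (y3-ε) (y3+ε) with hE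
  have hdist : ∀ z ∈ E, dist (Hs f z) (Hs f ((x1, x2, x3), (y1, y2, y3)))
      < |Hs f ((x1, x2, x3), (y1, y2, y3))| / 2 := by
    intro z hz
    apply hball
    obtain ⟨⟨hz11, hz12, hz13⟩, ⟨hz21, hz22, hz23⟩⟩ := hz
    have hd : dist z ((x1, x2, x3), (y1, y2, y3)) ≤ ε := by
      rw [Prod.dist_eq]
      apply max_le
      · rw [Prod.dist_eq]
        apply max_le
        · rw [Real.dist_eq]; exact abs_le.mpr ⟨by linarith [hz11.1], by linarith [hz11.2]⟩
        · rw [Prod.dist_eq]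
          apply max_le
          · rw [Real.dist_eq]; exact abs_le.mpr ⟨by linarith [hz12.1], by linarith [hz12.2]⟩
          · rw [Real.dist_eq]; exact abs_le.mpr ⟨by linarith [hz13.1], by linarith [hz13.2]⟩
      · rw [Prod.dist_eq]
        apply max_le
        · rw [Real.dist_eq]; exact abs_le.mpr ⟨by linarith [hz21.1], by linarith [hz21.2]⟩
        · rw [Prod.dist_eq]
          apply max_le
          · rw [Real.dist_eq]; exact abs_le.mpr ⟨by linarith [hz22.1], by linarith [hz22.2]⟩
          · rw [Real.dist_eq]; exact abs_le.mpr ⟨by linarith [hz23.1], by linarith [hz23.2]⟩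
    exact lt_of_le_of_lt hd hεδ
  have h2ε : (0 : ℝ) ≤ 2 * ε := by linarith
  have hvolE : volume E = ENNReal.ofReal (2*ε) * (ENNReal.ofReal (2*ε) * ENNReal.ofReal (2*ε))
      * (ENNReal.ofReal (2*ε) * (ENNReal.ofReal (2*ε) * ENNReal.ofReal (2*ε))) := by
    rw [hE, vol_boxprod, show x1+ε-(x1-ε) = 2*ε by ring, show x2+ε-(x2-ε) = 2*ε by ring,
      show x3+ε-(x3-ε) = 2*ε by ring, show y1+ε-(y1-ε) = 2*ε by ring,
      show y2+ε-(y2-ε) = 2*ε by ring, show y3+ε-(y3-ε) = 2*ε by ring]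
  have hvol : (volume E).toReal = (2*ε) * ((2*ε) * (2*ε)) * ((2*ε) * ((2*ε) * (2*ε))) := by
    rw [hvolE]
    simp only [ENNReal.toReal_mul, ENNReal.toReal_ofReal h2ε]
  have hvolpos : 0 < (volume E).toReal := by rw [hvol]; positivity
  have hvollt : volume E < ⊤ := by
    rw [hvolE]
    exact ENNReal.mul_lt_top (ENNReal.mul_lt_top ENNReal.ofReal_lt_top
        (ENNReal.mul_lt_top ENNReal.ofReal_lt_top ENNReal.ofReal_lt_top))
      (ENNReal.mul_lt_top ENNReal.ofReal_lt_top
        (ENNReal.mul_lt_top ENNReal.ofReal_lt_top ENNReal.ofReal_lt_top))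
  have hEmeas : MeasurableSet E := (box_measurable _ _ _ _ _ _).prod (box_measurable _ _ _ _ _ _)
  have hint : IntegrableOn (Hs f) E volume :=
    intOn_boxes _ (cont_Hs f hf) _ _ _ _ _ _ _ _ _ _ _ _
  have hvanE : ∫ z in E, Hs f z = 0 := hvan ε hεpos hεmax'
  rcases lt_or_gt_of_ne hne with hneg | hpos
  · have hub : ∀ z ∈ E, Hs f z ≤ Hs f ((x1, x2, x3), (y1, y2, y3)) / 2 := by
      intro z hz
      have h1 := hdist z hz
      rw [Real.dist_eq] at h1
      have habs : |Hs f ((x1, x2, x3), (y1, y2, y3))| = -(Hs f ((x1, x2, x3), (y1, y2, y3))) :=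
        abs_of_neg hneg
      rw [habs] at h1
      have h2 := (abs_lt.mp h1).2
      linarith
    have hconst : IntegrableOn (fun _ : M3 × M3 => Hs f ((x1, x2, x3), (y1, y2, y3)) / 2) E
        volume := integrableOn_const hvollt.ne
    have hle := setIntegral_mono_on hint hconst hEmeas hub
    rw [hvanE, setIntegral_const, smul_eq_mul, measureReal_def] at hle
    nlinarith
  · have hlb : ∀ z ∈ E, Hs f ((x1, x2, x3), (y1, y2, y3)) / 2 ≤ Hs f z := by
      intro z hz
      have h1 := hdist z hz
      rw [Real.dist_eq] at h1
      have habs : |Hs f ((x1, x2, x3), (y1, y2, y3))| = Hs f ((x1, x2, x3), (y1, y2, y3)) :=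
        abs_of_pos hpos
      rw [habs] at h1
      have h2 := (abs_lt.mp h1).1
      linarith
    have hconst : IntegrableOn (fun _ : M3 × M3 => Hs f ((x1, x2, x3), (y1, y2, y3)) / 2) E
        volume := integrableOn_const hvollt.ne
    have hle := setIntegral_mono_on hconst hint hEmeas hlb
    rw [hvanE, setIntegral_const, smul_eq_mul, measureReal_def] at hle
    nlinarith

lemma Df_zero_ordered (hf : Continuous f) (hyp : Hyp f) {x1 y1 x2 y2 x3 y3 : ℝ}
    (h1 : x1 < y1) (h2 : x2 < y2) (h3 : x3 ≤ y3) :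
    Df f ((x1, x2, x3), (y1, y2, y3)) = 0 := by
  have hH : Hs f ((x1, x2, x3), (y1, y2, y3)) = 0 := by
    rcases eq_or_lt_of_le h3 with he | hlt
    · subst he
      apply vanish_Hs f hf x1 x2 x3 y1 y2 x3 (min ((y1-x1)/2) ((y2-x2)/2))
        (lt_min (by linarith) (by linarith))
      intro ε hε hεlt
      have hεy1 : x1 + ε ≤ y1 - ε := by
        have := lt_of_lt_of_le hεlt (min_le_left _ _); linarith
      have hεy2 : x2 + ε ≤ y2 - ε := by
        have := lt_of_lt_of_le hεlt (min_le_right _ _); linarith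
      exact step2b f hf hyp (by linarith) hεy1 (by linarith) (by linarith) hεy2 (by linarith)
        (x3-ε) (x3+ε)
    · apply vanish_Hs f hf x1 x2 x3 y1 y2 y3
        (min ((y1-x1)/2) (min ((y2-x2)/2) ((y3-x3)/2)))
        (lt_min (by linarith) (lt_min (by linarith) (by linarith)))
      intro ε hε hεlt
      have hεy1 : x1 + ε ≤ y1 - ε := by
        have := lt_of_lt_of_le hεlt (min_le_left _ _); linarith
      have hεy2 : x2 + ε ≤ y2 - ε := by
        have := lt_of_lt_of_le hεlt ((min_le_right _ _).trans (min_le_left _ _)); linarith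
      have hεy3 : x3 + ε ≤ y3 - ε := by
        have := lt_of_lt_of_le hεlt ((min_le_right _ _).trans (min_le_right _ _)); linarith
      exact step3b f hf hyp (by linarith) hεy1 (by linarith) (by linarith) hεy2 (by linarith)
        (by linarith) hεy3 (by linarith)
  have hA : x1 - y1 ≠ 0 := sub_ne_zero.mpr (ne_of_lt h1)
  have hB : x2 - y2 ≠ 0 := sub_ne_zero.mpr (ne_of_lt h2)
  simp only [Hs] at hH
  rcases mul_eq_zero.mp hH with h | h
  · rcases mul_eq_zero.mp h with h' | h'
    · exact absurd h' hA
    · exact absurd h' hB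
  · exact h

lemma Df_zero_aux (hf : Continuous f) (hyp : Hyp f) {x1 y1 x2 y2 x3 y3 : ℝ}
    (h1 : x1 ≠ y1) (h2 : x2 ≠ y2) (h3 : x3 ≤ y3) :
    Df f ((x1, x2, x3), (y1, y2, y3)) = 0 := by
  rcases lt_or_gt_of_ne h1 with h1' | h1' <;> rcases lt_or_gt_of_ne h2 with h2' | h2'
  · exact Df_zero_ordered f hf hyp h1' h2' h3
  · have hthis := Df_zero_ordered f hf hyp h1' h2' h3
    simp only [Df] at hthis ⊢; linear_combination -hthis
  · have hthis := Df_zero_ordered f hf hyp h1' h2' h3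
    simp only [Df] at hthis ⊢; linear_combination -hthis
  · have hthis := Df_zero_ordered f hf hyp h1' h2' h3
    simp only [Df] at hthis ⊢; linear_combination hthis

lemma Df_zero (hf : Continuous f) (hyp : Hyp f) (x1 x2 x3 y1 y2 y3 : ℝ) :
    Df f ((x1, x2, x3), (y1, y2, y3)) = 0 := by
  rcases eq_or_ne x1 y1 with h1 | h1
  · subst h1; simp only [Df]; ring
  rcases eq_or_ne x2 y2 with h2 | h2
  · subst h2; simp only [Df]; ring
  rcases le_total x3 y3 with h3 | h3
  · exact Df_zero_aux f hf hyp h1 h2 h3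
  · have hthis := Df_zero_aux f hf hyp h1 h2 h3
    simp only [Df] at hthis ⊢; linear_combination hthis

lemma vol_box (a b c d e g : ℝ) :
    volume (box a b c d e g)
      = ENNReal.ofReal (b - a) * (ENNReal.ofReal (d - c) * ENNReal.ofReal (g - e)) := by
  have hv : (volume : Measure M3) =
      ((volume : Measure ℝ)).prod ((volume : Measure ℝ).prod (volume : Measure ℝ)) := rfl
  simp only [box]
  rw [hv, Measure.prod_prod, Measure.prod_prod]
  simp only [Real.volume_Icc]

lemma mu_box_pos (hf : Continuous f) (hpos : ∀ x, 0 < f x) {a b c d e g : ℝ}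
    (hab : a < b) (hcd : c < d) (heg : e < g) :
    0 < (volume.withDensity (fun x => ENNReal.ofReal (f x))) (box a b c d e g) := by
  have hne : (box a b c d e g).Nonempty :=
    (Set.nonempty_Icc.mpr hab.le).prod ((Set.nonempty_Icc.mpr hcd.le).prod
      (Set.nonempty_Icc.mpr heg.le))
  obtain ⟨z0, hz0, hmin⟩ := (box_compact a b c d e g).exists_isMinOn hne hf.continuousOn
  have hm : 0 < f z0 := hpos z0
  rw [withDensity_apply _ (box_measurable a b c d e g)]
  have hlow : ENNReal.ofReal (f z0) * volume (box a b c d e g)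
      ≤ ∫⁻ z in box a b c d e g, ENNReal.ofReal (f z) ∂volume := by
    rw [← setLIntegral_const]
    exact setLIntegral_mono' (box_measurable a b c d e g)
      (fun x hx => ENNReal.ofReal_le_ofReal (hmin hx))
  refine lt_of_lt_of_le ?_ hlow
  apply ENNReal.mul_pos
  · exact (ENNReal.ofReal_pos.mpr hm).ne'
  · rw [vol_box]
    have h1 : (0 : ℝ≥0∞) < ENNReal.ofReal (b - a) := ENNReal.ofReal_pos.mpr (by linarith)
    have h2 : (0 : ℝ≥0∞) < ENNReal.ofReal (d - c) := ENNReal.ofReal_pos.mpr (by linarith)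
    have h3 : (0 : ℝ≥0∞) < ENNReal.ofReal (g - e) := ENNReal.ofReal_pos.mpr (by linarith)
    exact (ENNReal.mul_pos h1.ne' (ENNReal.mul_pos h2.ne' h3.ne').ne').ne'

lemma int_f_box (hf : Continuous f) (hpos : ∀ x, 0 < f x) (a b c d e g : ℝ) :
    ∫ z in box a b c d e g, f z
      = ((volume.withDensity (fun x => ENNReal.ofReal (f x))) (box a b c d e g)).toReal := by
  rw [withDensity_apply _ (box_measurable a b c d e g)]
  rw [integral_eq_lintegral_of_nonneg_ae
    (Filter.Eventually.of_forall (fun z => (hpos z).le))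
    hf.aestronglyMeasurable]
end FourTermAux

/-- Three-dimensional step of the multivariate theorem: if `(X₁,X₂,X₃)` has a jointly
continuous, strictly positive density `f` on `ℝ³` and `Cov_A[X₁,X₂] = 0` on every quantile
box `A`, then `f` satisfies the four-term cross-product identity. -/
theorem density_four_term_identity_of_condCov_eq_zero
    {Ω : Type*} [MeasurableSpace Ω] (P : Measure Ω) [IsProbabilityMeasure P]
    (X₁ X₂ X₃ : Ω → ℝ) (hX₁ : Measurable X₁) (hX₂ : Measurable X₂) (hX₃ : Measurable X₃)
    (f : ℝ × ℝ × ℝ → ℝ) (hf_cont : Continuous f) (hf_pos : ∀ x, 0 < f x)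
    (hf_law : Measure.map (fun ω => (X₁ ω, X₂ ω, X₃ ω)) P =
      (volume : Measure (ℝ × ℝ × ℝ)).withDensity (fun x => ENNReal.ofReal (f x)))
    (hcov : ∀ p₁ q₁ p₂ q₂ p₃ q₃ : ℝ,
      0 < p₁ → p₁ < q₁ → q₁ < 1 → 0 < p₂ → p₂ < q₂ → q₂ < 1 → 0 < p₃ → p₃ < q₃ → q₃ < 1 →
      condCov P
        ({ω | quantileOf P X₁ p₁ ≤ X₁ ω ∧ X₁ ω ≤ quantileOf P X₁ q₁} ∩
          {ω | quantileOf P X₂ p₂ ≤ X₂ ω ∧ X₂ ω ≤ quantileOf P X₂ q₂} ∩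
          {ω | quantileOf P X₃ p₃ ≤ X₃ ω ∧ X₃ ω ≤ quantileOf P X₃ q₃})
        X₁ X₂ = 0) :
    ∀ x₁ x₂ x₃ y₁ y₂ y₃ : ℝ,
      f (x₁, x₂, x₃) * f (y₁, y₂, y₃) - f (x₁, y₂, x₃) * f (y₁, x₂, y₃) +
        f (x₁, x₂, y₃) * f (y₁, y₂, x₃) - f (x₁, y₂, y₃) * f (y₁, x₂, x₃) = 0 := by
  classical
  set X : Ω → FourTermAux.M3 := fun ω => (X₁ ω, X₂ ω, X₃ ω) with hXdef
  have hX : Measurable X := hX₁.prodMk (hX₂.prodMk hX₃)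
  set μf : Measure FourTermAux.M3 :=
    (volume : Measure FourTermAux.M3).withDensity (fun x => ENNReal.ofReal (f x)) with hμfdef
  have hmap : Measure.map X P = μf := hf_law
  haveI hμfprob : IsProbabilityMeasure μf :=
    ⟨by rw [← hmap, Measure.map_apply hX MeasurableSet.univ]; simp⟩
  -- measurability of halfspaces
  have hm1 : ∀ x : ℝ, MeasurableSet {z : FourTermAux.M3 | z.1 ≤ x} :=
    fun x => measurableSet_le measurable_fst measurable_const
  have hm2 : ∀ x : ℝ, MeasurableSet {z : FourTermAux.M3 | z.2.1 ≤ x} :=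
    fun x => measurableSet_le measurable_snd.fst measurable_const
  have hm3 : ∀ x : ℝ, MeasurableSet {z : FourTermAux.M3 | z.2.2 ≤ x} :=
    fun x => measurableSet_le measurable_snd.snd measurable_const
  have hm1' : ∀ x : ℝ, MeasurableSet {z : FourTermAux.M3 | x < z.1} :=
    fun x => measurableSet_lt measurable_const measurable_fst
  have hm2' : ∀ x : ℝ, MeasurableSet {z : FourTermAux.M3 | x < z.2.1} :=
    fun x => measurableSet_lt measurable_const measurable_snd.fst
  have hm3' : ∀ x : ℝ, MeasurableSet {z : FourTermAux.M3 | x < z.2.2} :=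
    fun x => measurableSet_lt measurable_const measurable_snd.snd
  -- cdf formulas
  have hcdf1 : ∀ x : ℝ, cdfOf P X₁ x = (μf {z : FourTermAux.M3 | z.1 ≤ x}).toReal := by
    intro x; unfold cdfOf; congr 1
    have hset : {ω | X₁ ω ≤ x} = X ⁻¹' {z : FourTermAux.M3 | z.1 ≤ x} := rfl
    rw [hset, ← hmap, Measure.map_apply hX (hm1 x)]
  have hcdf2 : ∀ x : ℝ, cdfOf P X₂ x = (μf {z : FourTermAux.M3 | z.2.1 ≤ x}).toReal := by
    intro x; unfold cdfOf; congr 1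
    have hset : {ω | X₂ ω ≤ x} = X ⁻¹' {z : FourTermAux.M3 | z.2.1 ≤ x} := rfl
    rw [hset, ← hmap, Measure.map_apply hX (hm2 x)]
  have hcdf3 : ∀ x : ℝ, cdfOf P X₃ x = (μf {z : FourTermAux.M3 | z.2.2 ≤ x}).toReal := by
    intro x; unfold cdfOf; congr 1
    have hset : {ω | X₃ ω ≤ x} = X ⁻¹' {z : FourTermAux.M3 | z.2.2 ≤ x} := rfl
    rw [hset, ← hmap, Measure.map_apply hX (hm3 x)]
  -- positivity of box measures for μf
  have hboxpos : ∀ {a b c d e g : ℝ}, a < b → c < d → e < g →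
      0 < μf (FourTermAux.box a b c d e g) := by
    intro a b c d e g hab hcd heg
    rw [hμfdef]
    exact FourTermAux.mu_box_pos f hf_cont hf_pos hab hcd heg
  -- strict monotonicity of the three cdfs
  have hmono1 : StrictMono (cdfOf P X₁) := by
    intro x y hxy
    rw [hcdf1, hcdf1]
    have hsub : {z : FourTermAux.M3 | z.1 ≤ y}
        = {z : FourTermAux.M3 | z.1 ≤ x} ∪ ({z : FourTermAux.M3 | x < z.1} ∩ {z : FourTermAux.M3 | z.1 ≤ y}) := by
      ext z; simp only [Set.mem_setOf_eq, Set.mem_union, Set.mem_inter_iff]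
      constructor
      · intro h; rcases le_or_gt z.1 x with h' | h'
        · exact Or.inl h'
        · exact Or.inr ⟨h', h⟩
      · rintro (h | ⟨_, h⟩); exacts [h.trans hxy.le, h]
    have hdisj : Disjoint {z : FourTermAux.M3 | z.1 ≤ x}
        ({z : FourTermAux.M3 | x < z.1} ∩ {z : FourTermAux.M3 | z.1 ≤ y}) := by
      rw [Set.disjoint_left]; rintro z hz ⟨h1, _⟩; exact not_le.mpr h1 (Set.mem_setOf_eq ▸ hz)
    rw [hsub, measure_union hdisj ((hm1' x).inter (hm1 y))]
    have hpos : 0 < μf ({z : FourTermAux.M3 | x < z.1} ∩ {z : FourTermAux.M3 | z.1 ≤ y}) := by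
      refine lt_of_lt_of_le (hboxpos (by linarith : (x+y)/2 < y) one_pos one_pos)
        (measure_mono ?_)
      rintro z ⟨⟨hz1, hz2⟩, _, _⟩
      exact ⟨by simp only [Set.mem_setOf_eq]; linarith, by simpa using hz2⟩
    rw [ENNReal.toReal_add (measure_ne_top _ _) (measure_ne_top _ _)]
    have := ENNReal.toReal_pos hpos.ne' (measure_ne_top _ _)
    linarith
  have hmono2 : StrictMono (cdfOf P X₂) := by
    intro x y hxy
    rw [hcdf2, hcdf2]
    have hsub : {z : FourTermAux.M3 | z.2.1 ≤ y}
        = {z : FourTermAux.M3 | z.2.1 ≤ x} ∪ ({z : FourTermAux.M3 | x < z.2.1} ∩ {z : FourTermAux.M3 | z.2.1 ≤ y}) := by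
      ext z; simp only [Set.mem_setOf_eq, Set.mem_union, Set.mem_inter_iff]
      constructor
      · intro h; rcases le_or_gt z.2.1 x with h' | h'
        · exact Or.inl h'
        · exact Or.inr ⟨h', h⟩
      · rintro (h | ⟨_, h⟩); exacts [h.trans hxy.le, h]
    have hdisj : Disjoint {z : FourTermAux.M3 | z.2.1 ≤ x}
        ({z : FourTermAux.M3 | x < z.2.1} ∩ {z : FourTermAux.M3 | z.2.1 ≤ y}) := by
      rw [Set.disjoint_left]; rintro z hz ⟨h1, _⟩; exact not_le.mpr h1 (Set.mem_setOf_eq ▸ hz)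
    rw [hsub, measure_union hdisj ((hm2' x).inter (hm2 y))]
    have hpos : 0 < μf ({z : FourTermAux.M3 | x < z.2.1} ∩ {z : FourTermAux.M3 | z.2.1 ≤ y}) := by
      refine lt_of_lt_of_le (hboxpos one_pos (by linarith : (x+y)/2 < y) one_pos)
        (measure_mono ?_)
      rintro z ⟨_, ⟨hz1, hz2⟩, _⟩
      exact ⟨by simp only [Set.mem_setOf_eq]; linarith, by simpa using hz2⟩
    rw [ENNReal.toReal_add (measure_ne_top _ _) (measure_ne_top _ _)]
    have := ENNReal.toReal_pos hpos.ne' (measure_ne_top _ _)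
    linarith
  have hmono3 : StrictMono (cdfOf P X₃) := by
    intro x y hxy
    rw [hcdf3, hcdf3]
    have hsub : {z : FourTermAux.M3 | z.2.2 ≤ y}
        = {z : FourTermAux.M3 | z.2.2 ≤ x} ∪ ({z : FourTermAux.M3 | x < z.2.2} ∩ {z : FourTermAux.M3 | z.2.2 ≤ y}) := by
      ext z; simp only [Set.mem_setOf_eq, Set.mem_union, Set.mem_inter_iff]
      constructor
      · intro h; rcases le_or_gt z.2.2 x with h' | h'
        · exact Or.inl h'
        · exact Or.inr ⟨h', h⟩
      · rintro (h | ⟨_, h⟩); exacts [h.trans hxy.le, h]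
    have hdisj : Disjoint {z : FourTermAux.M3 | z.2.2 ≤ x}
        ({z : FourTermAux.M3 | x < z.2.2} ∩ {z : FourTermAux.M3 | z.2.2 ≤ y}) := by
      rw [Set.disjoint_left]; rintro z hz ⟨h1, _⟩; exact not_le.mpr h1 (Set.mem_setOf_eq ▸ hz)
    rw [hsub, measure_union hdisj ((hm3' x).inter (hm3 y))]
    have hpos : 0 < μf ({z : FourTermAux.M3 | x < z.2.2} ∩ {z : FourTermAux.M3 | z.2.2 ≤ y}) := by
      refine lt_of_lt_of_le (hboxpos one_pos one_pos (by linarith : (x+y)/2 < y))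
        (measure_mono ?_)
      rintro z ⟨_, _, hz1, hz2⟩
      exact ⟨by simp only [Set.mem_setOf_eq]; linarith, by simpa using hz2⟩
    rw [ENNReal.toReal_add (measure_ne_top _ _) (measure_ne_top _ _)]
    have := ENNReal.toReal_pos hpos.ne' (measure_ne_top _ _)
    linarith
  -- cdf bounds
  have hq1 : ∀ x : ℝ, quantileOf P X₁ (cdfOf P X₁ x) = x :=
    fun x => Function.leftInverse_invFun hmono1.injective x
  have hq2 : ∀ x : ℝ, quantileOf P X₂ (cdfOf P X₂ x) = x :=
    fun x => Function.leftInverse_invFun hmono2.injective x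
  have hq3 : ∀ x : ℝ, quantileOf P X₃ (cdfOf P X₃ x) = x :=
    fun x => Function.leftInverse_invFun hmono3.injective x
  have hpos1 : ∀ x : ℝ, 0 < cdfOf P X₁ x := by
    intro x
    rw [hcdf1]
    refine ENNReal.toReal_pos (ne_of_gt ?_) (measure_ne_top _ _)
    refine lt_of_lt_of_le (hboxpos (by linarith : x - 1 < x) one_pos one_pos) (measure_mono ?_)
    rintro z ⟨⟨_, hz⟩, _, _⟩; exact hz
  have hpos2 : ∀ x : ℝ, 0 < cdfOf P X₂ x := by
    intro x
    rw [hcdf2]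
    refine ENNReal.toReal_pos (ne_of_gt ?_) (measure_ne_top _ _)
    refine lt_of_lt_of_le (hboxpos one_pos (by linarith : x - 1 < x) one_pos) (measure_mono ?_)
    rintro z ⟨_, ⟨_, hz⟩, _⟩; exact hz
  have hpos3 : ∀ x : ℝ, 0 < cdfOf P X₃ x := by
    intro x
    rw [hcdf3]
    refine ENNReal.toReal_pos (ne_of_gt ?_) (measure_ne_top _ _)
    refine lt_of_lt_of_le (hboxpos one_pos one_pos (by linarith : x - 1 < x)) (measure_mono ?_)
    rintro z ⟨_, _, _, hz⟩; exact hz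
  have hlt1 : ∀ x : ℝ, cdfOf P X₁ x < 1 := by
    intro x
    rw [hcdf1]
    have hsplit : (μf {z : FourTermAux.M3 | z.1 ≤ x}).toReal
        + (μf {z : FourTermAux.M3 | x < z.1}).toReal = 1 := by
      rw [← ENNReal.toReal_add (measure_ne_top _ _) (measure_ne_top _ _),
        ← measure_union (by rw [Set.disjoint_left]; rintro z hz h1; exact not_le.mpr h1 (Set.mem_setOf_eq ▸ hz))
          (hm1' x)]
      have : {z : FourTermAux.M3 | z.1 ≤ x} ∪ {z : FourTermAux.M3 | x < z.1} = Set.univ := by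
        ext z; simp [le_or_gt]
      rw [this]; simp
    have hpos : 0 < (μf {z : FourTermAux.M3 | x < z.1}).toReal := by
      refine ENNReal.toReal_pos (ne_of_gt ?_) (measure_ne_top _ _)
      refine lt_of_lt_of_le (hboxpos (by linarith : x + 1 < x + 2) one_pos one_pos)
        (measure_mono ?_)
      rintro z ⟨⟨hz, _⟩, _, _⟩; simp only [Set.mem_setOf_eq]; linarith
    linarith
  have hlt2 : ∀ x : ℝ, cdfOf P X₂ x < 1 := by
    intro x
    rw [hcdf2]
    have hsplit : (μf {z : FourTermAux.M3 | z.2.1 ≤ x}).toReal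
        + (μf {z : FourTermAux.M3 | x < z.2.1}).toReal = 1 := by
      rw [← ENNReal.toReal_add (measure_ne_top _ _) (measure_ne_top _ _),
        ← measure_union (by rw [Set.disjoint_left]; rintro z hz h1; exact not_le.mpr h1 (Set.mem_setOf_eq ▸ hz))
          (hm2' x)]
      have : {z : FourTermAux.M3 | z.2.1 ≤ x} ∪ {z : FourTermAux.M3 | x < z.2.1} = Set.univ := by
        ext z; simp [le_or_gt]
      rw [this]; simp
    have hpos : 0 < (μf {z : FourTermAux.M3 | x < z.2.1}).toReal := by
      refine ENNReal.toReal_pos (ne_of_gt ?_) (measure_ne_top _ _)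
      refine lt_of_lt_of_le (hboxpos one_pos (by linarith : x + 1 < x + 2) one_pos)
        (measure_mono ?_)
      rintro z ⟨_, ⟨hz, _⟩, _⟩; simp only [Set.mem_setOf_eq]; linarith
    linarith
  have hlt3 : ∀ x : ℝ, cdfOf P X₃ x < 1 := by
    intro x
    rw [hcdf3]
    have hsplit : (μf {z : FourTermAux.M3 | z.2.2 ≤ x}).toReal
        + (μf {z : FourTermAux.M3 | x < z.2.2}).toReal = 1 := by
      rw [← ENNReal.toReal_add (measure_ne_top _ _) (measure_ne_top _ _),
        ← measure_union (by rw [Set.disjoint_left]; rintro z hz h1; exact not_le.mpr h1 (Set.mem_setOf_eq ▸ hz))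
          (hm3' x)]
      have : {z : FourTermAux.M3 | z.2.2 ≤ x} ∪ {z : FourTermAux.M3 | x < z.2.2} = Set.univ := by
        ext z; simp [le_or_gt]
      rw [this]; simp
    have hpos : 0 < (μf {z : FourTermAux.M3 | x < z.2.2}).toReal := by
      refine ENNReal.toReal_pos (ne_of_gt ?_) (measure_ne_top _ _)
      refine lt_of_lt_of_le (hboxpos one_pos one_pos (by linarith : x + 1 < x + 2))
        (measure_mono ?_)
      rintro z ⟨_, _, hz, _⟩; simp only [Set.mem_setOf_eq]; linarith
    linarith
  -- conditional expectation formula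
  have hEint : ∀ (gφ : FourTermAux.M3 → ℝ), Continuous gφ → ∀ (a b c d e g : ℝ),
      ∫ ω, gφ (X ω) ∂(P[|X ⁻¹' FourTermAux.box a b c d e g])
        = ((μf (FourTermAux.box a b c d e g)).toReal)⁻¹
          * ∫ z in FourTermAux.box a b c d e g, f z * gφ z := by
    intro gφ hgφ a b c d e g
    have hBmeas := FourTermAux.box_measurable a b c d e g
    rw [ProbabilityTheory.cond, integral_smul_measure]
    have hPA : P (X ⁻¹' FourTermAux.box a b c d e g) = μf (FourTermAux.box a b c d e g) := by
      rw [← hmap, Measure.map_apply hX hBmeas]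
    have hres : ∫ ω in X ⁻¹' FourTermAux.box a b c d e g, gφ (X ω) ∂P
        = ∫ z in FourTermAux.box a b c d e g, f z * gφ z ∂volume := by
      rw [← setIntegral_map hBmeas hgφ.aestronglyMeasurable hX.aemeasurable, hmap]
      have hwd : μf = (volume : Measure FourTermAux.M3).withDensity
          (fun z => ((fun w : FourTermAux.M3 => (f w).toNNReal) z : ℝ≥0∞)) := rfl
      rw [hwd, setIntegral_withDensity_eq_setIntegral_smul
        (hf_cont.measurable.real_toNNReal) gφ hBmeas]
      have heq : (fun z : FourTermAux.M3 => ((f z).toNNReal : ℝ≥0) • gφ z)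
          = fun z => f z * gφ z := by
        funext z; rw [NNReal.smul_def, Real.coe_toNNReal _ (hf_pos z).le, smul_eq_mul]
      rw [heq]
    rw [hres, hPA, ENNReal.toReal_inv, smul_eq_mul]
  -- the key hypothesis in density form
  have hyp : FourTermAux.Hyp f := by
    intro a b c d e g hab hcd heg
    have hBmeas := FourTermAux.box_measurable a b c d e g
    have hμfB_pos : 0 < μf (FourTermAux.box a b c d e g) := hboxpos hab hcd heg
    have hr_pos : 0 < (μf (FourTermAux.box a b c d e g)).toReal :=
      ENNReal.toReal_pos hμfB_pos.ne' (measure_ne_top _ _)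
    have hcc := hcov (cdfOf P X₁ a) (cdfOf P X₁ b) (cdfOf P X₂ c) (cdfOf P X₂ d)
      (cdfOf P X₃ e) (cdfOf P X₃ g) (hpos1 a) (hmono1 hab) (hlt1 b) (hpos2 c) (hmono2 hcd)
      (hlt2 d) (hpos3 e) (hmono3 heg) (hlt3 g)
    rw [hq1 a, hq1 b, hq2 c, hq2 d, hq3 e, hq3 g] at hcc
    have hseteq : {ω | a ≤ X₁ ω ∧ X₁ ω ≤ b} ∩ {ω | c ≤ X₂ ω ∧ X₂ ω ≤ d}
        ∩ {ω | e ≤ X₃ ω ∧ X₃ ω ≤ g} = X ⁻¹' FourTermAux.box a b c d e g := by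
      ext ω
      simp only [Set.mem_inter_iff, Set.mem_setOf_eq, Set.mem_preimage, FourTermAux.box,
        Set.mem_prod, Set.mem_Icc]
      constructor
      · rintro ⟨⟨⟨h1, h2⟩, h3, h4⟩, h5, h6⟩; exact ⟨⟨h1, h2⟩, ⟨h3, h4⟩, ⟨h5, h6⟩⟩
      · rintro ⟨⟨h1, h2⟩, ⟨h3, h4⟩, ⟨h5, h6⟩⟩; exact ⟨⟨⟨h1, h2⟩, h3, h4⟩, h5, h6⟩
    rw [hseteq] at hcc
    simp only [condCov] at hcc
    have h12 : ∫ ω, X₁ ω * X₂ ω ∂(P[|X ⁻¹' FourTermAux.box a b c d e g])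
        = ((μf (FourTermAux.box a b c d e g)).toReal)⁻¹
          * ∫ z in FourTermAux.box a b c d e g, f z * (z.1 * z.2.1) :=
      hEint (fun z => z.1 * z.2.1) (by fun_prop) a b c d e g
    have h1 : ∫ ω, X₁ ω ∂(P[|X ⁻¹' FourTermAux.box a b c d e g])
        = ((μf (FourTermAux.box a b c d e g)).toReal)⁻¹
          * ∫ z in FourTermAux.box a b c d e g, f z * z.1 :=
      hEint (fun z => z.1) (by fun_prop) a b c d e g
    have h2 : ∫ ω, X₂ ω ∂(P[|X ⁻¹' FourTermAux.box a b c d e g])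
        = ((μf (FourTermAux.box a b c d e g)).toReal)⁻¹
          * ∫ z in FourTermAux.box a b c d e g, f z * z.2.1 :=
      hEint (fun z => z.2.1) (by fun_prop) a b c d e g
    rw [h12, h1, h2] at hcc
    have hintf : ∫ z in FourTermAux.box a b c d e g, f z
        = (μf (FourTermAux.box a b c d e g)).toReal := by
      rw [hμfdef]; exact FourTermAux.int_f_box f hf_cont hf_pos a b c d e g
    rw [hintf]
    have hr : (μf (FourTermAux.box a b c d e g)).toReal ≠ 0 := hr_pos.ne'
    set r := (μf (FourTermAux.box a b c d e g)).toReal with hrdef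
    set I12 := ∫ z in FourTermAux.box a b c d e g, f z * (z.1 * z.2.1) with hI12def
    set I1 := ∫ z in FourTermAux.box a b c d e g, f z * z.1 with hI1def
    set I2 := ∫ z in FourTermAux.box a b c d e g, f z * z.2.1 with hI2def
    have h' : (r * r) * (r⁻¹ * I12 - r⁻¹ * I1 * (r⁻¹ * I2)) = 0 := by rw [hcc, mul_zero]
    have hexp : (r * r) * (r⁻¹ * I12 - r⁻¹ * I1 * (r⁻¹ * I2)) = r * I12 - I1 * I2 := by
      field_simp
    linarith [h', hexp]
  intro x1 x2 x3 y1 y2 y3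
  exact FourTermAux.Df_zero f hf_cont hyp x1 x2 x3 y1 y2 y3
end FourTermAux
end
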